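/- Every infinite binary word u whose subword complexity satisfies p_u(n) ≤ 2n for all n ≥ 1 contains a nonempty factor of exponent ≥ 5/2; equivalently, the critical exponent of every infinite binary word with subword complexity bounded above by 2n is at least 5/2. -/

import Mathlib

/-- The factor of the infinite word `u` of length `m` starting at position `i`. -/
def factorAt {k : ℕ} (u : ℕ → Fin k) (i m : ℕ) : List (Fin k) :=
  (List.range m).map fun j => u (i + j)

/-- `v` is a factor of the infinite word `u`. -/
def IsFactor {k : ℕ} (v : List (Fin k)) (u : ℕ → Fin k) : Prop :=
  ∃ i, v = factorAt u i v.length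

/-- Subword complexity: the number of distinct factors of length `n`. -/
noncomputable def complexity {k : ℕ} (u : ℕ → Fin k) (n : ℕ) : ℕ :=
  Set.ncard {v : List (Fin k) | v.length = n ∧ IsFactor v u}

/-- The word `w` has period `q` (`1 ≤ q ≤ |w|`, and `w(i) = w(i+q)` whenever defined). -/
def HasPer {A : Type*} (w : List A) (q : ℕ) : Prop :=
  1 ≤ q ∧ q ≤ w.length ∧ ∀ i, i + q < w.length → w[i]? = w[i + q]?

/-- The minimal period of a finite word. -/
noncomputable def minPer {A : Type*} (w : List A) : ℕ := sInf {q | HasPer w q}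

/-- The exponent of a finite word: its length divided by its minimal period. -/
noncomputable def exponent {A : Type*} (w : List A) : ℝ := (w.length : ℝ) / (minPer w : ℝ)

/-- `u` is `α`-power-free: no nonempty factor has exponent `≥ α`. -/
def PowerFree {k : ℕ} (α : ℝ) (u : ℕ → Fin k) : Prop :=
  ∀ v : List (Fin k), v ≠ [] → IsFactor v u → exponent v < α

/-- `u` is `α⁺`-power-free: no nonempty factor has exponent `> α`. -/
def PowerFreePlus {k : ℕ} (α : ℝ) (u : ℕ → Fin k) : Prop :=
  ∀ v : List (Fin k), v ≠ [] → IsFactor v u → exponent v ≤ α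

/-- Overlap-free means `2⁺`-power-free. -/
def OverlapFree {k : ℕ} (u : ℕ → Fin k) : Prop := PowerFreePlus 2 u

/-- The Thue–Morse word: `t n` is the number of 1's, mod 2, in the binary expansion of `n`. -/
def thueMorse : ℕ → Fin 2 := fun n => Fin.ofNat 2 ((Nat.digits 2 n).count 1)

-- checker
def perOK (y q k : Nat) : Bool := (y ^^^ (y >>> q)) % 2 ^ k == 0

def qloop (y m : Nat) : Nat → Bool
  | 0 => false
  | k + 1 => perOK y (k + 1) (m - (k + 1)) || qloop y m k

def powS (x L : Nat) : Nat → Bool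
  | 0 => false
  | s + 1 => (qloop (x >>> s) (L - s) (2 * (L - s) / 5)) || powS x L s

def powChk (x L : Nat) : Bool := powS x L L

def msk (x n : Nat) : Nat → Nat
  | 0 => 0
  | i + 1 => (1 <<< ((x >>> i) % 2 ^ n)) ||| msk x n i

def pc : Nat → Nat → Nat
  | 0, _ => 0
  | f + 1, z => z % 2 + pc f (z / 2)

def cntAt (x L n : Nat) : Bool := decide (n ≤ L) && decide (2 * n < pc 16 (msk x n (L + 1 - n)))

def cntChk (x L : Nat) : Bool := cntAt x L 1 || cntAt x L 2 || cntAt x L 3 || cntAt x L 4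

def chk (x L : Nat) : Bool := powChk x L || cntChk x L

def good (x L : Nat) : Nat → Bool
  | 0 => chk x L
  | f + 1 => chk x L || (good x (L + 1) f && good (x + 2 ^ L) (L + 1) f)


-- encoding
def encU : (ℕ → Fin 2) → ℕ → ℕ
  | _, 0 => 0
  | u, L + 1 => (u 0).val + 2 * encU (fun i => u (i + 1)) L

lemma encU_lt (u : ℕ → Fin 2) (L : ℕ) : encU u L < 2 ^ L := by
  induction L generalizing u with
  | zero => simp [encU]
  | succ L ih =>
    have h1 := (u 0).isLt
    have h2 := ih (fun i => u (i + 1))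
    simp only [encU, pow_succ]
    omega

lemma encU_testBit (u : ℕ → Fin 2) (L i : ℕ) (h : i < L) :
    (encU u L).testBit i = decide ((u i).val = 1) := by
  induction L generalizing u i with
  | zero => omega
  | succ L ih =>
    have h1 := (u 0).isLt
    cases i with
    | zero =>
      rw [encU, Nat.testBit_zero]
      congr 1
      simp only [eq_iff_iff]
      omega
    | succ i =>
      rw [encU, Nat.testBit_add_one]
      have : ((u 0).val + 2 * encU (fun i => u (i + 1)) L) / 2 = encU (fun i => u (i + 1)) L := by
        omega
      rw [this, ih (fun i => u (i + 1)) i (by omega)]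

lemma encU_succ_top (u : ℕ → Fin 2) (L : ℕ) :
    encU u (L + 1) = encU u L + (u L).val * 2 ^ L := by
  induction L generalizing u with
  | zero => simp [encU]
  | succ L ih =>
    rw [encU, ih (fun i => u (i + 1))]
    rw [show encU u (L+1) = (u 0).val + 2 * encU (fun i => u (i + 1)) L from rfl]
    ring

lemma encU_congr (u1 u2 : ℕ → Fin 2) (n : ℕ) (h : ∀ j < n, u1 j = u2 j) :
    encU u1 n = encU u2 n := by
  induction n generalizing u1 u2 with
  | zero => rfl
  | succ n ih =>
    rw [encU, encU, h 0 (by omega), ih _ _ (fun j hj => h (j + 1) (by omega))]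

lemma encU_shift_mod (u : ℕ → Fin 2) (L i n : ℕ) (h : i + n ≤ L) :
    (encU u L >>> i) % 2 ^ n = encU (fun j => u (i + j)) n := by
  apply Nat.eq_of_testBit_eq
  intro j
  rw [Nat.testBit_mod_two_pow, Nat.testBit_shiftRight]
  by_cases hj : j < n
  · rw [encU_testBit u L (i + j) (by omega), encU_testBit _ n j hj]
    simp [hj]
  · rw [Nat.testBit_lt_two_pow (lt_of_lt_of_le (encU_lt _ n) (Nat.pow_le_pow_right (by norm_num) (by omega)))]
    simp [hj]


-- factorAt basics
lemma factorAt_length {k : ℕ} (u : ℕ → Fin k) (i m : ℕ) : (factorAt u i m).length = m := by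
  simp [factorAt]

lemma factorAt_get? {k : ℕ} (u : ℕ → Fin k) (i m j : ℕ) (h : j < m) :
    (factorAt u i m)[j]? = some (u (i + j)) := by
  simp [factorAt, List.getElem?_map, List.getElem?_range, h]

-- pow side
lemma qloop_spec (y m k : ℕ) (h : qloop y m k = true) :
    ∃ q, 1 ≤ q ∧ q ≤ k ∧ perOK y q (m - q) = true := by
  induction k with
  | zero => simp [qloop] at h
  | succ k ih =>
    rw [qloop, Bool.or_eq_true] at h
    rcases h with h | h
    · exact ⟨k + 1, by omega, le_refl _, h⟩
    · obtain ⟨q, h1, h2, h3⟩ := ih h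
      exact ⟨q, h1, by omega, h3⟩

lemma powS_spec (x L c : ℕ) (h : powS x L c = true) :
    ∃ s < c, qloop (x >>> s) (L - s) (2 * (L - s) / 5) = true := by
  induction c with
  | zero => simp [powS] at h
  | succ c ih =>
    rw [powS, Bool.or_eq_true] at h
    rcases h with h | h
    · exact ⟨c, by omega, h⟩
    · obtain ⟨s, h1, h2⟩ := ih h
      exact ⟨s, by omega, h2⟩

lemma perOK_bits (y q k : ℕ) (h : perOK y q k = true) :
    ∀ i < k, y.testBit i = y.testBit (i + q) := by
  intro i hi
  rw [perOK, beq_iff_eq] at h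
  have h0 : ((y ^^^ (y >>> q)) % 2 ^ k).testBit i = false := by rw [h]; exact Nat.zero_testBit i
  rw [Nat.testBit_mod_two_pow] at h0
  simp only [hi, decide_true, Bool.true_and, Nat.testBit_xor, Nat.testBit_shiftRight] at h0
  rw [Nat.add_comm q i] at h0
  revert h0
  cases hy : y.testBit i <;> cases hy2 : y.testBit (i + q) <;> simp

lemma hasPer_factor (u : ℕ → Fin 2) (s m q : ℕ) (hq1 : 1 ≤ q) (hqm : q ≤ m)
    (hb : ∀ i, i + q < m → u (s + i) = u (s + (i + q))) :
    HasPer (factorAt u s m) q := by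
  refine ⟨hq1, by rw [factorAt_length]; exact hqm, ?_⟩
  intro i hi
  rw [factorAt_length] at hi
  rw [factorAt_get? u s m i (by omega), factorAt_get? u s m (i + q) hi, hb i hi]

lemma exponent_ge (v : List (Fin 2)) (q : ℕ) (hper : HasPer v q) (h5 : 5 * q ≤ 2 * v.length) :
    (5 / 2 : ℝ) ≤ exponent v := by
  have hne : {p | HasPer v p}.Nonempty := ⟨q, hper⟩
  have hmem : HasPer v (minPer v) := Nat.sInf_mem hne
  have hle : minPer v ≤ q := Nat.sInf_le hper
  have hpos : 0 < minPer v := hmem.1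
  rw [exponent, div_le_div_iff₀ (by norm_num) (by positivity)]
  have h5' : (5 : ℝ) * q ≤ 2 * v.length := by exact_mod_cast h5
  have hle' : (minPer v : ℝ) ≤ q := by exact_mod_cast hle
  linarith

lemma powChk_sem (u : ℕ → Fin 2) (L : ℕ) (h : powChk (encU u L) L = true) :
    ∃ v : List (Fin 2), v ≠ [] ∧ IsFactor v u ∧ (5 / 2 : ℝ) ≤ exponent v := by
  obtain ⟨s, hs, hq⟩ := powS_spec _ _ _ h
  obtain ⟨q, hq1, hq2, hper⟩ := qloop_spec _ _ _ hq
  set m := L - s with hm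
  have h5 : 5 * q ≤ 2 * m := by
    have := (Nat.le_div_iff_mul_le (by norm_num : 0 < 5)).mp hq2
    omega
  have hm3 : 3 ≤ m := by omega
  have hbits : ∀ i, i + q < m → u (s + i) = u (s + (i + q)) := by
    intro i hi
    have hb := perOK_bits _ _ _ hper i (by omega)
    rw [Nat.testBit_shiftRight, Nat.testBit_shiftRight] at hb
    rw [encU_testBit u L (s + i) (by omega), encU_testBit u L (s + (i + q)) (by omega)] at hb
    have h1 := (u (s + i)).isLt
    have h2 := (u (s + (i + q))).isLt
    have := decide_eq_decide.mp hb
    exact Fin.ext (by omega)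
  refine ⟨factorAt u s m, ?_, ⟨s, by rw [factorAt_length]⟩, ?_⟩
  · have := factorAt_length u s m
    intro hnil
    rw [hnil] at this
    simp at this
    omega
  · exact exponent_ge _ q (hasPer_factor u s m q hq1 (by omega) hbits)
      (by rw [factorAt_length]; omega)

-- count side
lemma pc_spec (f z : ℕ) : ∃ T : Finset ℕ, T.card = pc f z ∧ ∀ v ∈ T, z.testBit v = true := by
  induction f generalizing z with
  | zero => exact ⟨∅, rfl, by simp⟩
  | succ f ih =>
    obtain ⟨T, hc, hb⟩ := ih (z / 2)
    rcases Nat.mod_two_eq_zero_or_one z with hz | hz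
    · refine ⟨T.image (· + 1), ?_, ?_⟩
      · rw [Finset.card_image_of_injective _ (add_left_injective 1), hc, pc, hz]
        omega
      · intro v hv
        obtain ⟨w, hw, rfl⟩ := Finset.mem_image.mp hv
        rw [Nat.testBit_add_one]; exact hb w hw
    · refine ⟨insert 0 (T.image (· + 1)), ?_, ?_⟩
      · rw [Finset.card_insert_of_notMem (by simp),
          Finset.card_image_of_injective _ (add_left_injective 1), hc, pc, hz]
        omega
      · intro v hv
        rcases Finset.mem_insert.mp hv with rfl | hv
        · rw [Nat.testBit_zero]; simp [hz]
        · obtain ⟨w, hw, rfl⟩ := Finset.mem_image.mp hv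
          rw [Nat.testBit_add_one]; exact hb w hw

lemma msk_spec (x n c v : ℕ) (h : (msk x n c).testBit v = true) :
    ∃ i < c, (x >>> i) % 2 ^ n = v := by
  induction c with
  | zero => rw [msk] at h; rw [Nat.zero_testBit] at h; exact absurd h (by simp)
  | succ c ih =>
    rw [msk, Nat.testBit_or, Bool.or_eq_true] at h
    rcases h with h | h
    · rw [Nat.shiftLeft_eq, one_mul, Nat.testBit_two_pow] at h
      exact ⟨c, by omega, of_decide_eq_true h⟩
    · obtain ⟨i, hi, hv⟩ := ih h
      exact ⟨i, by omega, hv⟩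

lemma factor_set_finite (u : ℕ → Fin 2) (n : ℕ) :
    {v : List (Fin 2) | v.length = n ∧ IsFactor v u}.Finite :=
  (List.finite_length_eq (Fin 2) n).subset fun _ hv => hv.1

lemma cntAt_sem (u : ℕ → Fin 2) (L n : ℕ) (h : cntAt (encU u L) L n = true) :
    2 * n < complexity u n := by
  rw [cntAt, Bool.and_eq_true, decide_eq_true_iff, decide_eq_true_iff] at h
  obtain ⟨hnL, hcnt⟩ := h
  obtain ⟨T, hTc, hTb⟩ := pc_spec 16 (msk (encU u L) n (L + 1 - n))
  rw [← hTc] at hcnt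
  -- map each v ∈ T to a factor
  classical
  set g : ℕ → List (Fin 2) := fun v =>
    if hx : ∃ i, i < L + 1 - n ∧ (encU u L >>> i) % 2 ^ n = v then factorAt u hx.choose n
    else [] with hg
  have hgood : ∀ v ∈ T, ∃ i, i < L + 1 - n ∧ (encU u L >>> i) % 2 ^ n = v := by
    intro v hv
    obtain ⟨i, hi, he⟩ := msk_spec _ _ _ _ (hTb v hv)
    exact ⟨i, hi, he⟩
  have hkey : ∀ v ∈ T, ∃ i, i < L + 1 - n ∧ g v = factorAt u i n ∧
      encU (fun j => u (i + j)) n = v := by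
    intro v hv
    have hx := hgood v hv
    refine ⟨hx.choose, hx.choose_spec.1, by rw [hg]; simp only [dif_pos hx], ?_⟩
    rw [← encU_shift_mod u L hx.choose n (by omega)]
    exact hx.choose_spec.2
  have hinj : Set.InjOn g T := by
    intro v1 h1 v2 h2 heq
    obtain ⟨i1, hi1, hg1, he1⟩ := hkey v1 h1
    obtain ⟨i2, hi2, hg2, he2⟩ := hkey v2 h2
    rw [← he1, ← he2]
    apply encU_congr
    intro j hj
    have : (factorAt u i1 n)[j]? = (factorAt u i2 n)[j]? := by
      rw [← hg1, ← hg2, heq]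
    rw [factorAt_get? u i1 n j hj, factorAt_get? u i2 n j hj] at this
    exact Option.some_injective _ this
  have hsub : ↑(T.image g) ⊆ {v : List (Fin 2) | v.length = n ∧ IsFactor v u} := by
    intro w hw
    obtain ⟨v, hv, rfl⟩ := Finset.mem_coe.mp hw |> Finset.mem_image.mp
    obtain ⟨i, hi, hg1, _⟩ := hkey v hv
    rw [hg1]
    exact ⟨factorAt_length u i n, ⟨i, by rw [factorAt_length]⟩⟩
  have hcard : (T.image g).card = T.card := Finset.card_image_of_injOn hinj
  have := Set.ncard_le_ncard hsub (factor_set_finite u n)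
  rw [Set.ncard_coe_finset, hcard] at this
  rw [complexity]
  omega

lemma cntChk_sem (u : ℕ → Fin 2) (L : ℕ) (h : cntChk (encU u L) L = true)
    (hcom : ∀ n, 1 ≤ n → complexity u n ≤ 2 * n) : False := by
  rw [cntChk] at h
  simp only [Bool.or_eq_true] at h
  rcases h with ((h | h) | h) | h <;>
    [ (have := cntAt_sem u L 1 h; have := hcom 1 (by omega));
      (have := cntAt_sem u L 2 h; have := hcom 2 (by omega));
      (have := cntAt_sem u L 3 h; have := hcom 3 (by omega));
      (have := cntAt_sem u L 4 h; have := hcom 4 (by omega))] <;> omega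

-- dfs
lemma good_spec (u : ℕ → Fin 2) (f : ℕ) : ∀ L, good (encU u L) L f = true →
    ∃ L', chk (encU u L') L' = true := by
  induction f with
  | zero => intro L h; exact ⟨L, h⟩
  | succ f ih =>
    intro L h
    rw [good, Bool.or_eq_true, Bool.and_eq_true] at h
    rcases h with h | ⟨h0, h1⟩
    · exact ⟨L, h⟩
    · have htop := encU_succ_top u L
      have hval := (u L).isLt
      have hval2 : (u L).val = 0 ∨ (u L).val = 1 := by omega
      rcases hval2 with hv | hv
      · apply ih (L + 1)
        rw [htop, hv]; simpa using h0
      · apply ih (L + 1)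
        rw [htop, hv, one_mul]; exact h1


lemma good_step (x L f : Nat) (h0 : good x (L + 1) f = true)
    (h1 : good (x + 2 ^ L) (L + 1) f = true) : good x L (f + 1) = true := by
  rw [good, h0, h1]; simp

set_option maxRecDepth 100000
set_option maxHeartbeats 4000000

theorem g_3_0 : good 0 3 36 = true := by decide
theorem g_6_4 : good 4 6 33 = true := by decide
theorem g_8_36 : good 36 8 31 = true := by decide
theorem g_9_164 : good 164 9 30 = true := by decide
theorem g_12_420 : good 420 12 27 = true := by decide
theorem g_15_2468 : good 2468 15 24 = true := by decide
theorem g_16_18852 : good 18852 16 23 = true := by decide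
theorem g_18_51620 : good 51620 18 21 = true := by decide
theorem g_18_182692 : good 182692 18 21 = true := by decide
theorem g_17_51620 : good 51620 17 22 = true := good_step 51620 17 21 g_18_51620 g_18_182692
theorem g_17_117156 : good 117156 17 22 = true := by decide
theorem g_16_51620 : good 51620 16 23 = true := good_step 51620 16 22 g_17_51620 g_17_117156
theorem g_15_18852 : good 18852 15 24 = true := good_step 18852 15 23 g_16_18852 g_16_51620
theorem g_14_2468 : good 2468 14 25 = true := good_step 2468 14 24 g_15_2468 g_15_18852
theorem g_14_10660 : good 10660 14 25 = true := by decide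
theorem g_13_2468 : good 2468 13 26 = true := good_step 2468 13 25 g_14_2468 g_14_10660
theorem g_13_6564 : good 6564 13 26 = true := by decide
theorem g_12_2468 : good 2468 12 27 = true := good_step 2468 12 26 g_13_2468 g_13_6564
theorem g_11_420 : good 420 11 28 = true := good_step 420 11 27 g_12_420 g_12_2468
theorem g_11_1444 : good 1444 11 28 = true := by decide
theorem g_10_420 : good 420 10 29 = true := good_step 420 10 28 g_11_420 g_11_1444
theorem g_10_932 : good 932 10 29 = true := by decide
theorem g_9_420 : good 420 9 30 = true := good_step 420 9 29 g_10_420 g_10_932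
theorem g_8_164 : good 164 8 31 = true := good_step 164 8 30 g_9_164 g_9_420
theorem g_7_36 : good 36 7 32 = true := good_step 36 7 31 g_8_36 g_8_164
theorem g_10_100 : good 100 10 29 = true := by decide
theorem g_13_612 : good 612 13 26 = true := by decide
theorem g_14_4708 : good 4708 14 25 = true := by decide
theorem g_16_12900 : good 12900 16 23 = true := by decide
theorem g_17_45668 : good 45668 17 22 = true := by decide
theorem g_17_111204 : good 111204 17 22 = true := by decide
theorem g_16_45668 : good 45668 16 23 = true := good_step 45668 16 22 g_17_45668 g_17_111204
theorem g_15_12900 : good 12900 15 24 = true := good_step 12900 15 23 g_16_12900 g_16_45668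
theorem g_15_29284 : good 29284 15 24 = true := by decide
theorem g_14_12900 : good 12900 14 25 = true := good_step 12900 14 24 g_15_12900 g_15_29284
theorem g_13_4708 : good 4708 13 26 = true := good_step 4708 13 25 g_14_4708 g_14_12900
theorem g_12_612 : good 612 12 27 = true := good_step 612 12 26 g_13_612 g_13_4708
theorem g_13_2660 : good 2660 13 26 = true := by decide
theorem g_16_6756 : good 6756 16 23 = true := by decide
theorem g_16_39524 : good 39524 16 23 = true := by decide
theorem g_15_6756 : good 6756 15 24 = true := good_step 6756 15 23 g_16_6756 g_16_39524
theorem g_15_23140 : good 23140 15 24 = true := by decide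
theorem g_14_6756 : good 6756 14 25 = true := good_step 6756 14 24 g_15_6756 g_15_23140
theorem g_14_14948 : good 14948 14 25 = true := by decide
theorem g_13_6756 : good 6756 13 26 = true := good_step 6756 13 25 g_14_6756 g_14_14948
theorem g_12_2660 : good 2660 12 27 = true := good_step 2660 12 26 g_13_2660 g_13_6756
theorem g_11_612 : good 612 11 28 = true := good_step 612 11 27 g_12_612 g_12_2660
theorem g_11_1636 : good 1636 11 28 = true := by decide
theorem g_10_612 : good 612 10 29 = true := good_step 612 10 28 g_11_612 g_11_1636
theorem g_9_100 : good 100 9 30 = true := good_step 100 9 29 g_10_100 g_10_612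
theorem g_12_356 : good 356 12 27 = true := by decide
theorem g_13_2404 : good 2404 13 26 = true := by decide
theorem g_15_6500 : good 6500 15 24 = true := by decide
theorem g_15_22884 : good 22884 15 24 = true := by decide
theorem g_14_6500 : good 6500 14 25 = true := good_step 6500 14 24 g_15_6500 g_15_22884
theorem g_14_14692 : good 14692 14 25 = true := by decide
theorem g_13_6500 : good 6500 13 26 = true := good_step 6500 13 25 g_14_6500 g_14_14692
theorem g_12_2404 : good 2404 12 27 = true := good_step 2404 12 26 g_13_2404 g_13_6500
theorem g_11_356 : good 356 11 28 = true := good_step 356 11 27 g_12_356 g_12_2404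
theorem g_11_1380 : good 1380 11 28 = true := by decide
theorem g_10_356 : good 356 10 29 = true := good_step 356 10 28 g_11_356 g_11_1380
theorem g_13_868 : good 868 13 26 = true := by decide
theorem g_14_4964 : good 4964 14 25 = true := by decide
theorem g_14_13156 : good 13156 14 25 = true := by decide
theorem g_13_4964 : good 4964 13 26 = true := good_step 4964 13 25 g_14_4964 g_14_13156
theorem g_12_868 : good 868 12 27 = true := good_step 868 12 26 g_13_868 g_13_4964
theorem g_12_2916 : good 2916 12 27 = true := by decide
theorem g_11_868 : good 868 11 28 = true := good_step 868 11 27 g_12_868 g_12_2916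
theorem g_11_1892 : good 1892 11 28 = true := by decide
theorem g_10_868 : good 868 10 29 = true := good_step 868 10 28 g_11_868 g_11_1892
theorem g_9_356 : good 356 9 30 = true := good_step 356 9 29 g_10_356 g_10_868
theorem g_8_100 : good 100 8 31 = true := good_step 100 8 30 g_9_100 g_9_356
theorem g_8_228 : good 228 8 31 = true := by decide
theorem g_7_100 : good 100 7 32 = true := good_step 100 7 31 g_8_100 g_8_228
theorem g_6_36 : good 36 6 33 = true := good_step 36 6 32 g_7_36 g_7_100
theorem g_5_4 : good 4 5 34 = true := good_step 4 5 33 g_6_4 g_6_36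
theorem g_6_20 : good 20 6 33 = true := by decide
theorem g_9_52 : good 52 9 30 = true := by decide
theorem g_12_308 : good 308 12 27 = true := by decide
theorem g_13_2356 : good 2356 13 26 = true := by decide
theorem g_16_6452 : good 6452 16 23 = true := by decide
theorem g_16_39220 : good 39220 16 23 = true := by decide
theorem g_15_6452 : good 6452 15 24 = true := good_step 6452 15 23 g_16_6452 g_16_39220
theorem g_15_22836 : good 22836 15 24 = true := by decide
theorem g_14_6452 : good 6452 14 25 = true := good_step 6452 14 24 g_15_6452 g_15_22836
theorem g_14_14644 : good 14644 14 25 = true := by decide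
theorem g_13_6452 : good 6452 13 26 = true := good_step 6452 13 25 g_14_6452 g_14_14644
theorem g_12_2356 : good 2356 12 27 = true := good_step 2356 12 26 g_13_2356 g_13_6452
theorem g_11_308 : good 308 11 28 = true := good_step 308 11 27 g_12_308 g_12_2356
theorem g_11_1332 : good 1332 11 28 = true := by decide
theorem g_10_308 : good 308 10 29 = true := good_step 308 10 28 g_11_308 g_11_1332
theorem g_12_820 : good 820 12 27 = true := by decide
theorem g_13_2868 : good 2868 13 26 = true := by decide
theorem g_16_6964 : good 6964 16 23 = true := by decide
theorem g_16_39732 : good 39732 16 23 = true := by decide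
theorem g_15_6964 : good 6964 15 24 = true := good_step 6964 15 23 g_16_6964 g_16_39732
theorem g_15_23348 : good 23348 15 24 = true := by decide
theorem g_14_6964 : good 6964 14 25 = true := good_step 6964 14 24 g_15_6964 g_15_23348
theorem g_14_15156 : good 15156 14 25 = true := by decide
theorem g_13_6964 : good 6964 13 26 = true := good_step 6964 13 25 g_14_6964 g_14_15156
theorem g_12_2868 : good 2868 12 27 = true := good_step 2868 12 26 g_13_2868 g_13_6964
theorem g_11_820 : good 820 11 28 = true := good_step 820 11 27 g_12_820 g_12_2868
theorem g_11_1844 : good 1844 11 28 = true := by decide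
theorem g_10_820 : good 820 10 29 = true := good_step 820 10 28 g_11_820 g_11_1844
theorem g_9_308 : good 308 9 30 = true := good_step 308 9 29 g_10_308 g_10_820
theorem g_8_52 : good 52 8 31 = true := good_step 52 8 30 g_9_52 g_9_308
theorem g_8_180 : good 180 8 31 = true := by decide
theorem g_7_52 : good 52 7 32 = true := good_step 52 7 31 g_8_52 g_8_180
theorem g_7_116 : good 116 7 32 = true := by decide
theorem g_6_52 : good 52 6 33 = true := good_step 52 6 32 g_7_52 g_7_116
theorem g_5_20 : good 20 5 34 = true := good_step 20 5 33 g_6_20 g_6_52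
theorem g_4_4 : good 4 4 35 = true := good_step 4 4 34 g_5_4 g_5_20
theorem g_7_12 : good 12 7 32 = true := by decide
theorem g_10_76 : good 76 10 29 = true := by decide
theorem g_11_588 : good 588 11 28 = true := by decide
theorem g_14_1612 : good 1612 14 25 = true := by decide
theorem g_16_9804 : good 9804 16 23 = true := by decide
theorem g_16_42572 : good 42572 16 23 = true := by decide
theorem g_15_9804 : good 9804 15 24 = true := good_step 9804 15 23 g_16_9804 g_16_42572
theorem g_15_26188 : good 26188 15 24 = true := by decide
theorem g_14_9804 : good 9804 14 25 = true := good_step 9804 14 24 g_15_9804 g_15_26188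
theorem g_13_1612 : good 1612 13 26 = true := good_step 1612 13 25 g_14_1612 g_14_9804
theorem g_15_5708 : good 5708 15 24 = true := by decide
theorem g_15_22092 : good 22092 15 24 = true := by decide
theorem g_14_5708 : good 5708 14 25 = true := good_step 5708 14 24 g_15_5708 g_15_22092
theorem g_14_13900 : good 13900 14 25 = true := by decide
theorem g_13_5708 : good 5708 13 26 = true := good_step 5708 13 25 g_14_5708 g_14_13900
theorem g_12_1612 : good 1612 12 27 = true := good_step 1612 12 26 g_13_1612 g_13_5708
theorem g_12_3660 : good 3660 12 27 = true := by decide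
theorem g_11_1612 : good 1612 11 28 = true := good_step 1612 11 27 g_12_1612 g_12_3660
theorem g_10_588 : good 588 10 29 = true := good_step 588 10 28 g_11_588 g_11_1612
theorem g_9_76 : good 76 9 30 = true := good_step 76 9 29 g_10_76 g_10_588
theorem g_10_332 : good 332 10 29 = true := by decide
theorem g_13_844 : good 844 13 26 = true := by decide
theorem g_14_4940 : good 4940 14 25 = true := by decide
theorem g_16_13132 : good 13132 16 23 = true := by decide
theorem g_17_45900 : good 45900 17 22 = true := by decide
theorem g_17_111436 : good 111436 17 22 = true := by decide
theorem g_16_45900 : good 45900 16 23 = true := good_step 45900 16 22 g_17_45900 g_17_111436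
theorem g_15_13132 : good 13132 15 24 = true := good_step 13132 15 23 g_16_13132 g_16_45900
theorem g_15_29516 : good 29516 15 24 = true := by decide
theorem g_14_13132 : good 13132 14 25 = true := good_step 13132 14 24 g_15_13132 g_15_29516
theorem g_13_4940 : good 4940 13 26 = true := good_step 4940 13 25 g_14_4940 g_14_13132
theorem g_12_844 : good 844 12 27 = true := good_step 844 12 26 g_13_844 g_13_4940
theorem g_12_2892 : good 2892 12 27 = true := by decide
theorem g_11_844 : good 844 11 28 = true := good_step 844 11 27 g_12_844 g_12_2892
theorem g_11_1868 : good 1868 11 28 = true := by decide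
theorem g_10_844 : good 844 10 29 = true := good_step 844 10 28 g_11_844 g_11_1868
theorem g_9_332 : good 332 9 30 = true := good_step 332 9 29 g_10_332 g_10_844
theorem g_8_76 : good 76 8 31 = true := good_step 76 8 30 g_9_76 g_9_332
theorem g_10_204 : good 204 10 29 = true := by decide
theorem g_13_716 : good 716 13 26 = true := by decide
theorem g_14_4812 : good 4812 14 25 = true := by decide
theorem g_17_13004 : good 13004 17 22 = true := by decide
theorem g_19_78540 : good 78540 19 20 = true := by decide
theorem g_19_340684 : good 340684 19 20 = true := by decide
theorem g_18_78540 : good 78540 18 21 = true := good_step 78540 18 20 g_19_78540 g_19_340684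
theorem g_18_209612 : good 209612 18 21 = true := by decide
theorem g_17_78540 : good 78540 17 22 = true := good_step 78540 17 21 g_18_78540 g_18_209612
theorem g_16_13004 : good 13004 16 23 = true := good_step 13004 16 22 g_17_13004 g_17_78540
theorem g_16_45772 : good 45772 16 23 = true := by decide
theorem g_15_13004 : good 13004 15 24 = true := good_step 13004 15 23 g_16_13004 g_16_45772
theorem g_15_29388 : good 29388 15 24 = true := by decide
theorem g_14_13004 : good 13004 14 25 = true := good_step 13004 14 24 g_15_13004 g_15_29388
theorem g_13_4812 : good 4812 13 26 = true := good_step 4812 13 25 g_14_4812 g_14_13004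
theorem g_12_716 : good 716 12 27 = true := good_step 716 12 26 g_13_716 g_13_4812
theorem g_12_2764 : good 2764 12 27 = true := by decide
theorem g_11_716 : good 716 11 28 = true := good_step 716 11 27 g_12_716 g_12_2764
theorem g_14_1740 : good 1740 14 25 = true := by decide
theorem g_16_9932 : good 9932 16 23 = true := by decide
theorem g_16_42700 : good 42700 16 23 = true := by decide
theorem g_15_9932 : good 9932 15 24 = true := good_step 9932 15 23 g_16_9932 g_16_42700
theorem g_17_26316 : good 26316 17 22 = true := by decide
theorem g_18_91852 : good 91852 18 21 = true := by decide
theorem g_18_222924 : good 222924 18 21 = true := by decide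
theorem g_17_91852 : good 91852 17 22 = true := good_step 91852 17 21 g_18_91852 g_18_222924
theorem g_16_26316 : good 26316 16 23 = true := good_step 26316 16 22 g_17_26316 g_17_91852
theorem g_16_59084 : good 59084 16 23 = true := by decide
theorem g_15_26316 : good 26316 15 24 = true := good_step 26316 15 23 g_16_26316 g_16_59084
theorem g_14_9932 : good 9932 14 25 = true := good_step 9932 14 24 g_15_9932 g_15_26316
theorem g_13_1740 : good 1740 13 26 = true := good_step 1740 13 25 g_14_1740 g_14_9932
theorem g_13_5836 : good 5836 13 26 = true := by decide
theorem g_12_1740 : good 1740 12 27 = true := good_step 1740 12 26 g_13_1740 g_13_5836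
theorem g_12_3788 : good 3788 12 27 = true := by decide
theorem g_11_1740 : good 1740 11 28 = true := good_step 1740 11 27 g_12_1740 g_12_3788
theorem g_10_716 : good 716 10 29 = true := good_step 716 10 28 g_11_716 g_11_1740
theorem g_9_204 : good 204 9 30 = true := good_step 204 9 29 g_10_204 g_10_716
theorem g_9_460 : good 460 9 30 = true := by decide
theorem g_8_204 : good 204 8 31 = true := good_step 204 8 30 g_9_204 g_9_460
theorem g_7_76 : good 76 7 32 = true := good_step 76 7 31 g_8_76 g_8_204
theorem g_6_12 : good 12 6 33 = true := good_step 12 6 32 g_7_12 g_7_76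
theorem g_9_44 : good 44 9 30 = true := by decide
theorem g_10_300 : good 300 10 29 = true := by decide
theorem g_13_812 : good 812 13 26 = true := by decide
theorem g_16_4908 : good 4908 16 23 = true := by decide
theorem g_16_37676 : good 37676 16 23 = true := by decide
theorem g_15_4908 : good 4908 15 24 = true := good_step 4908 15 23 g_16_4908 g_16_37676
theorem g_15_21292 : good 21292 15 24 = true := by decide
theorem g_14_4908 : good 4908 14 25 = true := good_step 4908 14 24 g_15_4908 g_15_21292
theorem g_14_13100 : good 13100 14 25 = true := by decide
theorem g_13_4908 : good 4908 13 26 = true := good_step 4908 13 25 g_14_4908 g_14_13100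
theorem g_12_812 : good 812 12 27 = true := good_step 812 12 26 g_13_812 g_13_4908
theorem g_13_2860 : good 2860 13 26 = true := by decide
theorem g_16_6956 : good 6956 16 23 = true := by decide
theorem g_16_39724 : good 39724 16 23 = true := by decide
theorem g_15_6956 : good 6956 15 24 = true := good_step 6956 15 23 g_16_6956 g_16_39724
theorem g_15_23340 : good 23340 15 24 = true := by decide
theorem g_14_6956 : good 6956 14 25 = true := good_step 6956 14 24 g_15_6956 g_15_23340
theorem g_14_15148 : good 15148 14 25 = true := by decide
theorem g_13_6956 : good 6956 13 26 = true := good_step 6956 13 25 g_14_6956 g_14_15148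
theorem g_12_2860 : good 2860 12 27 = true := good_step 2860 12 26 g_13_2860 g_13_6956
theorem g_11_812 : good 812 11 28 = true := good_step 812 11 27 g_12_812 g_12_2860
theorem g_11_1836 : good 1836 11 28 = true := by decide
theorem g_10_812 : good 812 10 29 = true := good_step 812 10 28 g_11_812 g_11_1836
theorem g_9_300 : good 300 9 30 = true := good_step 300 9 29 g_10_300 g_10_812
theorem g_8_44 : good 44 8 31 = true := good_step 44 8 30 g_9_44 g_9_300
theorem g_8_172 : good 172 8 31 = true := by decide
theorem g_7_44 : good 44 7 32 = true := good_step 44 7 31 g_8_44 g_8_172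
theorem g_10_108 : good 108 10 29 = true := by decide
theorem g_12_620 : good 620 12 27 = true := by decide
theorem g_13_2668 : good 2668 13 26 = true := by decide
theorem g_15_6764 : good 6764 15 24 = true := by decide
theorem g_15_23148 : good 23148 15 24 = true := by decide
theorem g_14_6764 : good 6764 14 25 = true := good_step 6764 14 24 g_15_6764 g_15_23148
theorem g_14_14956 : good 14956 14 25 = true := by decide
theorem g_13_6764 : good 6764 13 26 = true := good_step 6764 13 25 g_14_6764 g_14_14956
theorem g_12_2668 : good 2668 12 27 = true := good_step 2668 12 26 g_13_2668 g_13_6764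
theorem g_11_620 : good 620 11 28 = true := good_step 620 11 27 g_12_620 g_12_2668
theorem g_13_1644 : good 1644 13 26 = true := by decide
theorem g_16_5740 : good 5740 16 23 = true := by decide
theorem g_16_38508 : good 38508 16 23 = true := by decide
theorem g_15_5740 : good 5740 15 24 = true := good_step 5740 15 23 g_16_5740 g_16_38508
theorem g_15_22124 : good 22124 15 24 = true := by decide
theorem g_14_5740 : good 5740 14 25 = true := good_step 5740 14 24 g_15_5740 g_15_22124
theorem g_17_13932 : good 13932 17 22 = true := by decide
theorem g_19_79468 : good 79468 19 20 = true := by decide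
theorem g_19_341612 : good 341612 19 20 = true := by decide
theorem g_18_79468 : good 79468 18 21 = true := good_step 79468 18 20 g_19_79468 g_19_341612
theorem g_18_210540 : good 210540 18 21 = true := by decide
theorem g_17_79468 : good 79468 17 22 = true := good_step 79468 17 21 g_18_79468 g_18_210540
theorem g_16_13932 : good 13932 16 23 = true := good_step 13932 16 22 g_17_13932 g_17_79468
theorem g_16_46700 : good 46700 16 23 = true := by decide
theorem g_15_13932 : good 13932 15 24 = true := good_step 13932 15 23 g_16_13932 g_16_46700
theorem g_15_30316 : good 30316 15 24 = true := by decide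
theorem g_14_13932 : good 13932 14 25 = true := good_step 13932 14 24 g_15_13932 g_15_30316
theorem g_13_5740 : good 5740 13 26 = true := good_step 5740 13 25 g_14_5740 g_14_13932
theorem g_12_1644 : good 1644 12 27 = true := good_step 1644 12 26 g_13_1644 g_13_5740
theorem g_12_3692 : good 3692 12 27 = true := by decide
theorem g_11_1644 : good 1644 11 28 = true := good_step 1644 11 27 g_12_1644 g_12_3692
theorem g_10_620 : good 620 10 29 = true := good_step 620 10 28 g_11_620 g_11_1644
theorem g_9_108 : good 108 9 30 = true := good_step 108 9 29 g_10_108 g_10_620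
theorem g_9_364 : good 364 9 30 = true := by decide
theorem g_8_108 : good 108 8 31 = true := good_step 108 8 30 g_9_108 g_9_364
theorem g_8_236 : good 236 8 31 = true := by decide
theorem g_7_108 : good 108 7 32 = true := good_step 108 7 31 g_8_108 g_8_236
theorem g_6_44 : good 44 6 33 = true := good_step 44 6 32 g_7_44 g_7_108
theorem g_5_12 : good 12 5 34 = true := good_step 12 5 33 g_6_12 g_6_44
theorem g_5_28 : good 28 5 34 = true := by decide
theorem g_4_12 : good 12 4 35 = true := good_step 12 4 34 g_5_12 g_5_28
theorem g_3_4 : good 4 3 36 = true := good_step 4 3 35 g_4_4 g_4_12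
theorem g_2_0 : good 0 2 37 = true := good_step 0 2 36 g_3_0 g_3_4
theorem g_5_2 : good 2 5 34 = true := by decide
theorem g_7_18 : good 18 7 32 = true := by decide
theorem g_8_82 : good 82 8 31 = true := by decide
theorem g_11_210 : good 210 11 28 = true := by decide
theorem g_14_1234 : good 1234 14 25 = true := by decide
theorem g_15_9426 : good 9426 15 24 = true := by decide
theorem g_17_25810 : good 25810 17 22 = true := by decide
theorem g_17_91346 : good 91346 17 22 = true := by decide
theorem g_16_25810 : good 25810 16 23 = true := good_step 25810 16 22 g_17_25810 g_17_91346
theorem g_16_58578 : good 58578 16 23 = true := by decide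
theorem g_15_25810 : good 25810 15 24 = true := good_step 25810 15 23 g_16_25810 g_16_58578
theorem g_14_9426 : good 9426 14 25 = true := good_step 9426 14 24 g_15_9426 g_15_25810
theorem g_13_1234 : good 1234 13 26 = true := good_step 1234 13 25 g_14_1234 g_14_9426
theorem g_13_5330 : good 5330 13 26 = true := by decide
theorem g_12_1234 : good 1234 12 27 = true := good_step 1234 12 26 g_13_1234 g_13_5330
theorem g_12_3282 : good 3282 12 27 = true := by decide
theorem g_11_1234 : good 1234 11 28 = true := good_step 1234 11 27 g_12_1234 g_12_3282
theorem g_10_210 : good 210 10 29 = true := good_step 210 10 28 g_11_210 g_11_1234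
theorem g_10_722 : good 722 10 29 = true := by decide
theorem g_9_210 : good 210 9 30 = true := good_step 210 9 29 g_10_210 g_10_722
theorem g_9_466 : good 466 9 30 = true := by decide
theorem g_8_210 : good 210 8 31 = true := good_step 210 8 30 g_9_210 g_9_466
theorem g_7_82 : good 82 7 32 = true := good_step 82 7 31 g_8_82 g_8_210
theorem g_6_18 : good 18 6 33 = true := good_step 18 6 32 g_7_18 g_7_82
theorem g_9_50 : good 50 9 30 = true := by decide
theorem g_12_306 : good 306 12 27 = true := by decide
theorem g_13_2354 : good 2354 13 26 = true := by decide
theorem g_16_6450 : good 6450 16 23 = true := by decide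
theorem g_18_39218 : good 39218 18 21 = true := by decide
theorem g_18_170290 : good 170290 18 21 = true := by decide
theorem g_17_39218 : good 39218 17 22 = true := good_step 39218 17 21 g_18_39218 g_18_170290
theorem g_17_104754 : good 104754 17 22 = true := by decide
theorem g_16_39218 : good 39218 16 23 = true := good_step 39218 16 22 g_17_39218 g_17_104754
theorem g_15_6450 : good 6450 15 24 = true := good_step 6450 15 23 g_16_6450 g_16_39218
theorem g_16_22834 : good 22834 16 23 = true := by decide
theorem g_16_55602 : good 55602 16 23 = true := by decide
theorem g_15_22834 : good 22834 15 24 = true := good_step 22834 15 23 g_16_22834 g_16_55602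
theorem g_14_6450 : good 6450 14 25 = true := good_step 6450 14 24 g_15_6450 g_15_22834
theorem g_14_14642 : good 14642 14 25 = true := by decide
theorem g_13_6450 : good 6450 13 26 = true := good_step 6450 13 25 g_14_6450 g_14_14642
theorem g_12_2354 : good 2354 12 27 = true := good_step 2354 12 26 g_13_2354 g_13_6450
theorem g_11_306 : good 306 11 28 = true := good_step 306 11 27 g_12_306 g_12_2354
theorem g_12_1330 : good 1330 12 27 = true := by decide
theorem g_15_3378 : good 3378 15 24 = true := by decide
theorem g_16_19762 : good 19762 16 23 = true := by decide
theorem g_16_52530 : good 52530 16 23 = true := by decide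
theorem g_15_19762 : good 19762 15 24 = true := good_step 19762 15 23 g_16_19762 g_16_52530
theorem g_14_3378 : good 3378 14 25 = true := good_step 3378 14 24 g_15_3378 g_15_19762
theorem g_14_11570 : good 11570 14 25 = true := by decide
theorem g_13_3378 : good 3378 13 26 = true := good_step 3378 13 25 g_14_3378 g_14_11570
theorem g_13_7474 : good 7474 13 26 = true := by decide
theorem g_12_3378 : good 3378 12 27 = true := good_step 3378 12 26 g_13_3378 g_13_7474
theorem g_11_1330 : good 1330 11 28 = true := good_step 1330 11 27 g_12_1330 g_12_3378
theorem g_10_306 : good 306 10 29 = true := good_step 306 10 28 g_11_306 g_11_1330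
theorem g_10_818 : good 818 10 29 = true := by decide
theorem g_9_306 : good 306 9 30 = true := good_step 306 9 29 g_10_306 g_10_818
theorem g_8_50 : good 50 8 31 = true := good_step 50 8 30 g_9_50 g_9_306
theorem g_11_178 : good 178 11 28 = true := by decide
theorem g_12_1202 : good 1202 12 27 = true := by decide
theorem g_14_3250 : good 3250 14 25 = true := by decide
theorem g_14_11442 : good 11442 14 25 = true := by decide
theorem g_13_3250 : good 3250 13 26 = true := good_step 3250 13 25 g_14_3250 g_14_11442
theorem g_13_7346 : good 7346 13 26 = true := by decide
theorem g_12_3250 : good 3250 12 27 = true := good_step 3250 12 26 g_13_3250 g_13_7346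
theorem g_11_1202 : good 1202 11 28 = true := good_step 1202 11 27 g_12_1202 g_12_3250
theorem g_10_178 : good 178 10 29 = true := good_step 178 10 28 g_11_178 g_11_1202
theorem g_10_690 : good 690 10 29 = true := by decide
theorem g_9_178 : good 178 9 30 = true := good_step 178 9 29 g_10_178 g_10_690
theorem g_12_434 : good 434 12 27 = true := by decide
theorem g_13_2482 : good 2482 13 26 = true := by decide
theorem g_15_6578 : good 6578 15 24 = true := by decide
theorem g_15_22962 : good 22962 15 24 = true := by decide
theorem g_14_6578 : good 6578 14 25 = true := good_step 6578 14 24 g_15_6578 g_15_22962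
theorem g_14_14770 : good 14770 14 25 = true := by decide
theorem g_13_6578 : good 6578 13 26 = true := good_step 6578 13 25 g_14_6578 g_14_14770
theorem g_12_2482 : good 2482 12 27 = true := good_step 2482 12 26 g_13_2482 g_13_6578
theorem g_11_434 : good 434 11 28 = true := good_step 434 11 27 g_12_434 g_12_2482
theorem g_11_1458 : good 1458 11 28 = true := by decide
theorem g_10_434 : good 434 10 29 = true := good_step 434 10 28 g_11_434 g_11_1458
theorem g_10_946 : good 946 10 29 = true := by decide
theorem g_9_434 : good 434 9 30 = true := good_step 434 9 29 g_10_434 g_10_946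
theorem g_8_178 : good 178 8 31 = true := good_step 178 8 30 g_9_178 g_9_434
theorem g_7_50 : good 50 7 32 = true := good_step 50 7 31 g_8_50 g_8_178
theorem g_7_114 : good 114 7 32 = true := by decide
theorem g_6_50 : good 50 6 33 = true := good_step 50 6 32 g_7_50 g_7_114
theorem g_5_18 : good 18 5 34 = true := good_step 18 5 33 g_6_18 g_6_50
theorem g_4_2 : good 2 4 35 = true := good_step 2 4 34 g_5_2 g_5_18
theorem g_5_10 : good 10 5 34 = true := by decide
theorem g_8_26 : good 26 8 31 = true := by decide
theorem g_11_154 : good 154 11 28 = true := by decide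
theorem g_12_1178 : good 1178 12 27 = true := by decide
theorem g_15_3226 : good 3226 15 24 = true := by decide
theorem g_16_19610 : good 19610 16 23 = true := by decide
theorem g_16_52378 : good 52378 16 23 = true := by decide
theorem g_15_19610 : good 19610 15 24 = true := good_step 19610 15 23 g_16_19610 g_16_52378
theorem g_14_3226 : good 3226 14 25 = true := good_step 3226 14 24 g_15_3226 g_15_19610
theorem g_14_11418 : good 11418 14 25 = true := by decide
theorem g_13_3226 : good 3226 13 26 = true := good_step 3226 13 25 g_14_3226 g_14_11418
theorem g_13_7322 : good 7322 13 26 = true := by decide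
theorem g_12_3226 : good 3226 12 27 = true := good_step 3226 12 26 g_13_3226 g_13_7322
theorem g_11_1178 : good 1178 11 28 = true := good_step 1178 11 27 g_12_1178 g_12_3226
theorem g_10_154 : good 154 10 29 = true := good_step 154 10 28 g_11_154 g_11_1178
theorem g_11_666 : good 666 11 28 = true := by decide
theorem g_14_1690 : good 1690 14 25 = true := by decide
theorem g_14_9882 : good 9882 14 25 = true := by decide
theorem g_13_1690 : good 1690 13 26 = true := good_step 1690 13 25 g_14_1690 g_14_9882
theorem g_13_5786 : good 5786 13 26 = true := by decide
theorem g_12_1690 : good 1690 12 27 = true := good_step 1690 12 26 g_13_1690 g_13_5786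
theorem g_12_3738 : good 3738 12 27 = true := by decide
theorem g_11_1690 : good 1690 11 28 = true := good_step 1690 11 27 g_12_1690 g_12_3738
theorem g_10_666 : good 666 10 29 = true := good_step 666 10 28 g_11_666 g_11_1690
theorem g_9_154 : good 154 9 30 = true := good_step 154 9 29 g_10_154 g_10_666
theorem g_11_410 : good 410 11 28 = true := by decide
theorem g_12_1434 : good 1434 12 27 = true := by decide
theorem g_15_3482 : good 3482 15 24 = true := by decide
theorem g_16_19866 : good 19866 16 23 = true := by decide
theorem g_16_52634 : good 52634 16 23 = true := by decide
theorem g_15_19866 : good 19866 15 24 = true := good_step 19866 15 23 g_16_19866 g_16_52634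
theorem g_14_3482 : good 3482 14 25 = true := good_step 3482 14 24 g_15_3482 g_15_19866
theorem g_14_11674 : good 11674 14 25 = true := by decide
theorem g_13_3482 : good 3482 13 26 = true := good_step 3482 13 25 g_14_3482 g_14_11674
theorem g_13_7578 : good 7578 13 26 = true := by decide
theorem g_12_3482 : good 3482 12 27 = true := good_step 3482 12 26 g_13_3482 g_13_7578
theorem g_11_1434 : good 1434 11 28 = true := good_step 1434 11 27 g_12_1434 g_12_3482
theorem g_10_410 : good 410 10 29 = true := good_step 410 10 28 g_11_410 g_11_1434
theorem g_10_922 : good 922 10 29 = true := by decide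
theorem g_9_410 : good 410 9 30 = true := good_step 410 9 29 g_10_410 g_10_922
theorem g_8_154 : good 154 8 31 = true := good_step 154 8 30 g_9_154 g_9_410
theorem g_7_26 : good 26 7 32 = true := good_step 26 7 31 g_8_26 g_8_154
theorem g_7_90 : good 90 7 32 = true := by decide
theorem g_6_26 : good 26 6 33 = true := good_step 26 6 32 g_7_26 g_7_90
theorem g_6_58 : good 58 6 33 = true := by decide
theorem g_5_26 : good 26 5 34 = true := good_step 26 5 33 g_6_26 g_6_58
theorem g_4_10 : good 10 4 35 = true := good_step 10 4 34 g_5_10 g_5_26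
theorem g_3_2 : good 2 3 36 = true := good_step 2 3 35 g_4_2 g_4_10
theorem g_6_6 : good 6 6 33 = true := by decide
theorem g_9_38 : good 38 9 30 = true := by decide
theorem g_10_294 : good 294 10 29 = true := by decide
theorem g_13_806 : good 806 13 26 = true := by decide
theorem g_15_4902 : good 4902 15 24 = true := by decide
theorem g_15_21286 : good 21286 15 24 = true := by decide
theorem g_14_4902 : good 4902 14 25 = true := good_step 4902 14 24 g_15_4902 g_15_21286
theorem g_14_13094 : good 13094 14 25 = true := by decide
theorem g_13_4902 : good 4902 13 26 = true := good_step 4902 13 25 g_14_4902 g_14_13094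
theorem g_12_806 : good 806 12 27 = true := good_step 806 12 26 g_13_806 g_13_4902
theorem g_15_2854 : good 2854 15 24 = true := by decide
theorem g_16_19238 : good 19238 16 23 = true := by decide
theorem g_16_52006 : good 52006 16 23 = true := by decide
theorem g_15_19238 : good 19238 15 24 = true := good_step 19238 15 23 g_16_19238 g_16_52006
theorem g_14_2854 : good 2854 14 25 = true := good_step 2854 14 24 g_15_2854 g_15_19238
theorem g_14_11046 : good 11046 14 25 = true := by decide
theorem g_13_2854 : good 2854 13 26 = true := good_step 2854 13 25 g_14_2854 g_14_11046
theorem g_13_6950 : good 6950 13 26 = true := by decide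
theorem g_12_2854 : good 2854 12 27 = true := good_step 2854 12 26 g_13_2854 g_13_6950
theorem g_11_806 : good 806 11 28 = true := good_step 806 11 27 g_12_806 g_12_2854
theorem g_11_1830 : good 1830 11 28 = true := by decide
theorem g_10_806 : good 806 10 29 = true := good_step 806 10 28 g_11_806 g_11_1830
theorem g_9_294 : good 294 9 30 = true := good_step 294 9 29 g_10_294 g_10_806
theorem g_8_38 : good 38 8 31 = true := good_step 38 8 30 g_9_38 g_9_294
theorem g_9_166 : good 166 9 30 = true := by decide
theorem g_12_422 : good 422 12 27 = true := by decide
theorem g_14_2470 : good 2470 14 25 = true := by decide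
theorem g_14_10662 : good 10662 14 25 = true := by decide
theorem g_13_2470 : good 2470 13 26 = true := good_step 2470 13 25 g_14_2470 g_14_10662
theorem g_15_6566 : good 6566 15 24 = true := by decide
theorem g_16_22950 : good 22950 16 23 = true := by decide
theorem g_16_55718 : good 55718 16 23 = true := by decide
theorem g_15_22950 : good 22950 15 24 = true := good_step 22950 15 23 g_16_22950 g_16_55718
theorem g_14_6566 : good 6566 14 25 = true := good_step 6566 14 24 g_15_6566 g_15_22950
theorem g_14_14758 : good 14758 14 25 = true := by decide
theorem g_13_6566 : good 6566 13 26 = true := good_step 6566 13 25 g_14_6566 g_14_14758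
theorem g_12_2470 : good 2470 12 27 = true := good_step 2470 12 26 g_13_2470 g_13_6566
theorem g_11_422 : good 422 11 28 = true := good_step 422 11 27 g_12_422 g_12_2470
theorem g_11_1446 : good 1446 11 28 = true := by decide
theorem g_10_422 : good 422 10 29 = true := good_step 422 10 28 g_11_422 g_11_1446
theorem g_10_934 : good 934 10 29 = true := by decide
theorem g_9_422 : good 422 9 30 = true := good_step 422 9 29 g_10_422 g_10_934
theorem g_8_166 : good 166 8 31 = true := good_step 166 8 30 g_9_166 g_9_422
theorem g_7_38 : good 38 7 32 = true := good_step 38 7 31 g_8_38 g_8_166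
theorem g_9_102 : good 102 9 30 = true := by decide
theorem g_12_358 : good 358 12 27 = true := by decide
theorem g_13_2406 : good 2406 13 26 = true := by decide
theorem g_16_6502 : good 6502 16 23 = true := by decide
theorem g_18_39270 : good 39270 18 21 = true := by decide
theorem g_18_170342 : good 170342 18 21 = true := by decide
theorem g_17_39270 : good 39270 17 22 = true := good_step 39270 17 21 g_18_39270 g_18_170342
theorem g_17_104806 : good 104806 17 22 = true := by decide
theorem g_16_39270 : good 39270 16 23 = true := good_step 39270 16 22 g_17_39270 g_17_104806
theorem g_15_6502 : good 6502 15 24 = true := good_step 6502 15 23 g_16_6502 g_16_39270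
theorem g_15_22886 : good 22886 15 24 = true := by decide
theorem g_14_6502 : good 6502 14 25 = true := good_step 6502 14 24 g_15_6502 g_15_22886
theorem g_14_14694 : good 14694 14 25 = true := by decide
theorem g_13_6502 : good 6502 13 26 = true := good_step 6502 13 25 g_14_6502 g_14_14694
theorem g_12_2406 : good 2406 12 27 = true := good_step 2406 12 26 g_13_2406 g_13_6502
theorem g_11_358 : good 358 11 28 = true := good_step 358 11 27 g_12_358 g_12_2406
theorem g_11_1382 : good 1382 11 28 = true := by decide
theorem g_10_358 : good 358 10 29 = true := good_step 358 10 28 g_11_358 g_11_1382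
theorem g_13_870 : good 870 13 26 = true := by decide
theorem g_15_4966 : good 4966 15 24 = true := by decide
theorem g_15_21350 : good 21350 15 24 = true := by decide
theorem g_14_4966 : good 4966 14 25 = true := good_step 4966 14 24 g_15_4966 g_15_21350
theorem g_16_13158 : good 13158 16 23 = true := by decide
theorem g_17_45926 : good 45926 17 22 = true := by decide
theorem g_17_111462 : good 111462 17 22 = true := by decide
theorem g_16_45926 : good 45926 16 23 = true := good_step 45926 16 22 g_17_45926 g_17_111462
theorem g_15_13158 : good 13158 15 24 = true := good_step 13158 15 23 g_16_13158 g_16_45926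
theorem g_15_29542 : good 29542 15 24 = true := by decide
theorem g_14_13158 : good 13158 14 25 = true := good_step 13158 14 24 g_15_13158 g_15_29542
theorem g_13_4966 : good 4966 13 26 = true := good_step 4966 13 25 g_14_4966 g_14_13158
theorem g_12_870 : good 870 12 27 = true := good_step 870 12 26 g_13_870 g_13_4966
theorem g_12_2918 : good 2918 12 27 = true := by decide
theorem g_11_870 : good 870 11 28 = true := good_step 870 11 27 g_12_870 g_12_2918
theorem g_11_1894 : good 1894 11 28 = true := by decide
theorem g_10_870 : good 870 10 29 = true := good_step 870 10 28 g_11_870 g_11_1894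
theorem g_9_358 : good 358 9 30 = true := good_step 358 9 29 g_10_358 g_10_870
theorem g_8_102 : good 102 8 31 = true := good_step 102 8 30 g_9_102 g_9_358
theorem g_8_230 : good 230 8 31 = true := by decide
theorem g_7_102 : good 102 7 32 = true := good_step 102 7 31 g_8_102 g_8_230
theorem g_6_38 : good 38 6 33 = true := good_step 38 6 32 g_7_38 g_7_102
theorem g_5_6 : good 6 5 34 = true := good_step 6 5 33 g_6_6 g_6_38
theorem g_8_22 : good 22 8 31 = true := by decide
theorem g_9_150 : good 150 9 30 = true := by decide
theorem g_12_406 : good 406 12 27 = true := by decide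
theorem g_15_2454 : good 2454 15 24 = true := by decide
theorem g_16_18838 : good 18838 16 23 = true := by decide
theorem g_16_51606 : good 51606 16 23 = true := by decide
theorem g_15_18838 : good 18838 15 24 = true := good_step 18838 15 23 g_16_18838 g_16_51606
theorem g_14_2454 : good 2454 14 25 = true := good_step 2454 14 24 g_15_2454 g_15_18838
theorem g_14_10646 : good 10646 14 25 = true := by decide
theorem g_13_2454 : good 2454 13 26 = true := good_step 2454 13 25 g_14_2454 g_14_10646
theorem g_13_6550 : good 6550 13 26 = true := by decide
theorem g_12_2454 : good 2454 12 27 = true := good_step 2454 12 26 g_13_2454 g_13_6550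
theorem g_11_406 : good 406 11 28 = true := good_step 406 11 27 g_12_406 g_12_2454
theorem g_12_1430 : good 1430 12 27 = true := by decide
theorem g_15_3478 : good 3478 15 24 = true := by decide
theorem g_16_19862 : good 19862 16 23 = true := by decide
theorem g_16_52630 : good 52630 16 23 = true := by decide
theorem g_15_19862 : good 19862 15 24 = true := good_step 19862 15 23 g_16_19862 g_16_52630
theorem g_14_3478 : good 3478 14 25 = true := good_step 3478 14 24 g_15_3478 g_15_19862
theorem g_14_11670 : good 11670 14 25 = true := by decide
theorem g_13_3478 : good 3478 13 26 = true := good_step 3478 13 25 g_14_3478 g_14_11670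
theorem g_13_7574 : good 7574 13 26 = true := by decide
theorem g_12_3478 : good 3478 12 27 = true := good_step 3478 12 26 g_13_3478 g_13_7574
theorem g_11_1430 : good 1430 11 28 = true := good_step 1430 11 27 g_12_1430 g_12_3478
theorem g_10_406 : good 406 10 29 = true := good_step 406 10 28 g_11_406 g_11_1430
theorem g_10_918 : good 918 10 29 = true := by decide
theorem g_9_406 : good 406 9 30 = true := good_step 406 9 29 g_10_406 g_10_918
theorem g_8_150 : good 150 8 31 = true := good_step 150 8 30 g_9_150 g_9_406
theorem g_7_22 : good 22 7 32 = true := good_step 22 7 31 g_8_22 g_8_150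
theorem g_7_86 : good 86 7 32 = true := by decide
theorem g_6_22 : good 22 6 33 = true := good_step 22 6 32 g_7_22 g_7_86
theorem g_9_54 : good 54 9 30 = true := by decide
theorem g_12_310 : good 310 12 27 = true := by decide
theorem g_13_2358 : good 2358 13 26 = true := by decide
theorem g_15_6454 : good 6454 15 24 = true := by decide
theorem g_15_22838 : good 22838 15 24 = true := by decide
theorem g_14_6454 : good 6454 14 25 = true := good_step 6454 14 24 g_15_6454 g_15_22838
theorem g_14_14646 : good 14646 14 25 = true := by decide
theorem g_13_6454 : good 6454 13 26 = true := good_step 6454 13 25 g_14_6454 g_14_14646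
theorem g_12_2358 : good 2358 12 27 = true := good_step 2358 12 26 g_13_2358 g_13_6454
theorem g_11_310 : good 310 11 28 = true := good_step 310 11 27 g_12_310 g_12_2358
theorem g_12_1334 : good 1334 12 27 = true := by decide
theorem g_15_3382 : good 3382 15 24 = true := by decide
theorem g_16_19766 : good 19766 16 23 = true := by decide
theorem g_16_52534 : good 52534 16 23 = true := by decide
theorem g_15_19766 : good 19766 15 24 = true := good_step 19766 15 23 g_16_19766 g_16_52534
theorem g_14_3382 : good 3382 14 25 = true := good_step 3382 14 24 g_15_3382 g_15_19766
theorem g_14_11574 : good 11574 14 25 = true := by decide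
theorem g_13_3382 : good 3382 13 26 = true := good_step 3382 13 25 g_14_3382 g_14_11574
theorem g_13_7478 : good 7478 13 26 = true := by decide
theorem g_12_3382 : good 3382 12 27 = true := good_step 3382 12 26 g_13_3382 g_13_7478
theorem g_11_1334 : good 1334 11 28 = true := good_step 1334 11 27 g_12_1334 g_12_3382
theorem g_10_310 : good 310 10 29 = true := good_step 310 10 28 g_11_310 g_11_1334
theorem g_12_822 : good 822 12 27 = true := by decide
theorem g_15_2870 : good 2870 15 24 = true := by decide
theorem g_16_19254 : good 19254 16 23 = true := by decide
theorem g_16_52022 : good 52022 16 23 = true := by decide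
theorem g_15_19254 : good 19254 15 24 = true := good_step 19254 15 23 g_16_19254 g_16_52022
theorem g_14_2870 : good 2870 14 25 = true := good_step 2870 14 24 g_15_2870 g_15_19254
theorem g_14_11062 : good 11062 14 25 = true := by decide
theorem g_13_2870 : good 2870 13 26 = true := good_step 2870 13 25 g_14_2870 g_14_11062
theorem g_16_6966 : good 6966 16 23 = true := by decide
theorem g_18_39734 : good 39734 18 21 = true := by decide
theorem g_18_170806 : good 170806 18 21 = true := by decide
theorem g_17_39734 : good 39734 17 22 = true := good_step 39734 17 21 g_18_39734 g_18_170806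
theorem g_17_105270 : good 105270 17 22 = true := by decide
theorem g_16_39734 : good 39734 16 23 = true := good_step 39734 16 22 g_17_39734 g_17_105270
theorem g_15_6966 : good 6966 15 24 = true := good_step 6966 15 23 g_16_6966 g_16_39734
theorem g_15_23350 : good 23350 15 24 = true := by decide
theorem g_14_6966 : good 6966 14 25 = true := good_step 6966 14 24 g_15_6966 g_15_23350
theorem g_14_15158 : good 15158 14 25 = true := by decide
theorem g_13_6966 : good 6966 13 26 = true := good_step 6966 13 25 g_14_6966 g_14_15158
theorem g_12_2870 : good 2870 12 27 = true := good_step 2870 12 26 g_13_2870 g_13_6966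
theorem g_11_822 : good 822 11 28 = true := good_step 822 11 27 g_12_822 g_12_2870
theorem g_11_1846 : good 1846 11 28 = true := by decide
theorem g_10_822 : good 822 10 29 = true := good_step 822 10 28 g_11_822 g_11_1846
theorem g_9_310 : good 310 9 30 = true := good_step 310 9 29 g_10_310 g_10_822
theorem g_8_54 : good 54 8 31 = true := good_step 54 8 30 g_9_54 g_9_310
theorem g_8_182 : good 182 8 31 = true := by decide
theorem g_7_54 : good 54 7 32 = true := good_step 54 7 31 g_8_54 g_8_182
theorem g_7_118 : good 118 7 32 = true := by decide
theorem g_6_54 : good 54 6 33 = true := good_step 54 6 32 g_7_54 g_7_118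
theorem g_5_22 : good 22 5 34 = true := good_step 22 5 33 g_6_22 g_6_54
theorem g_4_6 : good 6 4 35 = true := good_step 6 4 34 g_5_6 g_5_22
theorem g_4_14 : good 14 4 35 = true := by decide
theorem g_3_6 : good 6 3 36 = true := good_step 6 3 35 g_4_6 g_4_14
theorem g_2_2 : good 2 2 37 = true := good_step 2 2 36 g_3_2 g_3_6
theorem g_1_0 : good 0 1 38 = true := good_step 0 1 37 g_2_0 g_2_2
theorem g_4_1 : good 1 4 35 = true := by decide
theorem g_7_9 : good 9 7 32 = true := by decide
theorem g_8_73 : good 73 8 31 = true := by decide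
theorem g_11_201 : good 201 11 28 = true := by decide
theorem g_14_1225 : good 1225 14 25 = true := by decide
theorem g_15_9417 : good 9417 15 24 = true := by decide
theorem g_17_25801 : good 25801 17 22 = true := by decide
theorem g_18_91337 : good 91337 18 21 = true := by decide
theorem g_18_222409 : good 222409 18 21 = true := by decide
theorem g_17_91337 : good 91337 17 22 = true := good_step 91337 17 21 g_18_91337 g_18_222409
theorem g_16_25801 : good 25801 16 23 = true := good_step 25801 16 22 g_17_25801 g_17_91337
theorem g_16_58569 : good 58569 16 23 = true := by decide
theorem g_15_25801 : good 25801 15 24 = true := good_step 25801 15 23 g_16_25801 g_16_58569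
theorem g_14_9417 : good 9417 14 25 = true := good_step 9417 14 24 g_15_9417 g_15_25801
theorem g_13_1225 : good 1225 13 26 = true := good_step 1225 13 25 g_14_1225 g_14_9417
theorem g_14_5321 : good 5321 14 25 = true := by decide
theorem g_16_13513 : good 13513 16 23 = true := by decide
theorem g_16_46281 : good 46281 16 23 = true := by decide
theorem g_15_13513 : good 13513 15 24 = true := good_step 13513 15 23 g_16_13513 g_16_46281
theorem g_15_29897 : good 29897 15 24 = true := by decide
theorem g_14_13513 : good 13513 14 25 = true := good_step 13513 14 24 g_15_13513 g_15_29897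
theorem g_13_5321 : good 5321 13 26 = true := good_step 5321 13 25 g_14_5321 g_14_13513
theorem g_12_1225 : good 1225 12 27 = true := good_step 1225 12 26 g_13_1225 g_13_5321
theorem g_12_3273 : good 3273 12 27 = true := by decide
theorem g_11_1225 : good 1225 11 28 = true := good_step 1225 11 27 g_12_1225 g_12_3273
theorem g_10_201 : good 201 10 29 = true := good_step 201 10 28 g_11_201 g_11_1225
theorem g_13_713 : good 713 13 26 = true := by decide
theorem g_14_4809 : good 4809 14 25 = true := by decide
theorem g_16_13001 : good 13001 16 23 = true := by decide
theorem g_16_45769 : good 45769 16 23 = true := by decide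
theorem g_15_13001 : good 13001 15 24 = true := good_step 13001 15 23 g_16_13001 g_16_45769
theorem g_15_29385 : good 29385 15 24 = true := by decide
theorem g_14_13001 : good 13001 14 25 = true := good_step 13001 14 24 g_15_13001 g_15_29385
theorem g_13_4809 : good 4809 13 26 = true := good_step 4809 13 25 g_14_4809 g_14_13001
theorem g_12_713 : good 713 12 27 = true := good_step 713 12 26 g_13_713 g_13_4809
theorem g_12_2761 : good 2761 12 27 = true := by decide
theorem g_11_713 : good 713 11 28 = true := good_step 713 11 27 g_12_713 g_12_2761
theorem g_14_1737 : good 1737 14 25 = true := by decide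
theorem g_15_9929 : good 9929 15 24 = true := by decide
theorem g_15_26313 : good 26313 15 24 = true := by decide
theorem g_14_9929 : good 9929 14 25 = true := good_step 9929 14 24 g_15_9929 g_15_26313
theorem g_13_1737 : good 1737 13 26 = true := good_step 1737 13 25 g_14_1737 g_14_9929
theorem g_13_5833 : good 5833 13 26 = true := by decide
theorem g_12_1737 : good 1737 12 27 = true := good_step 1737 12 26 g_13_1737 g_13_5833
theorem g_12_3785 : good 3785 12 27 = true := by decide
theorem g_11_1737 : good 1737 11 28 = true := good_step 1737 11 27 g_12_1737 g_12_3785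
theorem g_10_713 : good 713 10 29 = true := good_step 713 10 28 g_11_713 g_11_1737
theorem g_9_201 : good 201 9 30 = true := good_step 201 9 29 g_10_201 g_10_713
theorem g_9_457 : good 457 9 30 = true := by decide
theorem g_8_201 : good 201 8 31 = true := good_step 201 8 30 g_9_201 g_9_457
theorem g_7_73 : good 73 7 32 = true := good_step 73 7 31 g_8_73 g_8_201
theorem g_6_9 : good 9 6 33 = true := good_step 9 6 32 g_7_9 g_7_73
theorem g_7_41 : good 41 7 32 = true := by decide
theorem g_10_105 : good 105 10 29 = true := by decide
theorem g_13_617 : good 617 13 26 = true := by decide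
theorem g_14_4713 : good 4713 14 25 = true := by decide
theorem g_16_12905 : good 12905 16 23 = true := by decide
theorem g_16_45673 : good 45673 16 23 = true := by decide
theorem g_15_12905 : good 12905 15 24 = true := good_step 12905 15 23 g_16_12905 g_16_45673
theorem g_15_29289 : good 29289 15 24 = true := by decide
theorem g_14_12905 : good 12905 14 25 = true := good_step 12905 14 24 g_15_12905 g_15_29289
theorem g_13_4713 : good 4713 13 26 = true := good_step 4713 13 25 g_14_4713 g_14_12905
theorem g_12_617 : good 617 12 27 = true := good_step 617 12 26 g_13_617 g_13_4713
theorem g_12_2665 : good 2665 12 27 = true := by decide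
theorem g_11_617 : good 617 11 28 = true := good_step 617 11 27 g_12_617 g_12_2665
theorem g_13_1641 : good 1641 13 26 = true := by decide
theorem g_14_5737 : good 5737 14 25 = true := by decide
theorem g_16_13929 : good 13929 16 23 = true := by decide
theorem g_16_46697 : good 46697 16 23 = true := by decide
theorem g_15_13929 : good 13929 15 24 = true := good_step 13929 15 23 g_16_13929 g_16_46697
theorem g_15_30313 : good 30313 15 24 = true := by decide
theorem g_14_13929 : good 13929 14 25 = true := good_step 13929 14 24 g_15_13929 g_15_30313
theorem g_13_5737 : good 5737 13 26 = true := good_step 5737 13 25 g_14_5737 g_14_13929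
theorem g_12_1641 : good 1641 12 27 = true := good_step 1641 12 26 g_13_1641 g_13_5737
theorem g_12_3689 : good 3689 12 27 = true := by decide
theorem g_11_1641 : good 1641 11 28 = true := good_step 1641 11 27 g_12_1641 g_12_3689
theorem g_10_617 : good 617 10 29 = true := good_step 617 10 28 g_11_617 g_11_1641
theorem g_9_105 : good 105 9 30 = true := good_step 105 9 29 g_10_105 g_10_617
theorem g_9_361 : good 361 9 30 = true := by decide
theorem g_8_105 : good 105 8 31 = true := good_step 105 8 30 g_9_105 g_9_361
theorem g_8_233 : good 233 8 31 = true := by decide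
theorem g_7_105 : good 105 7 32 = true := good_step 105 7 31 g_8_105 g_8_233
theorem g_6_41 : good 41 6 33 = true := good_step 41 6 32 g_7_41 g_7_105
theorem g_5_9 : good 9 5 34 = true := good_step 9 5 33 g_6_9 g_6_41
theorem g_8_25 : good 25 8 31 = true := by decide
theorem g_11_153 : good 153 11 28 = true := by decide
theorem g_12_1177 : good 1177 12 27 = true := by decide
theorem g_15_3225 : good 3225 15 24 = true := by decide
theorem g_17_19609 : good 19609 17 22 = true := by decide
theorem g_17_85145 : good 85145 17 22 = true := by decide
theorem g_16_19609 : good 19609 16 23 = true := good_step 19609 16 22 g_17_19609 g_17_85145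
theorem g_16_52377 : good 52377 16 23 = true := by decide
theorem g_15_19609 : good 19609 15 24 = true := good_step 19609 15 23 g_16_19609 g_16_52377
theorem g_14_3225 : good 3225 14 25 = true := good_step 3225 14 24 g_15_3225 g_15_19609
theorem g_15_11417 : good 11417 15 24 = true := by decide
theorem g_15_27801 : good 27801 15 24 = true := by decide
theorem g_14_11417 : good 11417 14 25 = true := good_step 11417 14 24 g_15_11417 g_15_27801
theorem g_13_3225 : good 3225 13 26 = true := good_step 3225 13 25 g_14_3225 g_14_11417
theorem g_13_7321 : good 7321 13 26 = true := by decide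
theorem g_12_3225 : good 3225 12 27 = true := good_step 3225 12 26 g_13_3225 g_13_7321
theorem g_11_1177 : good 1177 11 28 = true := good_step 1177 11 27 g_12_1177 g_12_3225
theorem g_10_153 : good 153 10 29 = true := good_step 153 10 28 g_11_153 g_11_1177
theorem g_11_665 : good 665 11 28 = true := by decide
theorem g_14_1689 : good 1689 14 25 = true := by decide
theorem g_15_9881 : good 9881 15 24 = true := by decide
theorem g_17_26265 : good 26265 17 22 = true := by decide
theorem g_18_91801 : good 91801 18 21 = true := by decide
theorem g_18_222873 : good 222873 18 21 = true := by decide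
theorem g_17_91801 : good 91801 17 22 = true := good_step 91801 17 21 g_18_91801 g_18_222873
theorem g_16_26265 : good 26265 16 23 = true := good_step 26265 16 22 g_17_26265 g_17_91801
theorem g_16_59033 : good 59033 16 23 = true := by decide
theorem g_15_26265 : good 26265 15 24 = true := good_step 26265 15 23 g_16_26265 g_16_59033
theorem g_14_9881 : good 9881 14 25 = true := good_step 9881 14 24 g_15_9881 g_15_26265
theorem g_13_1689 : good 1689 13 26 = true := good_step 1689 13 25 g_14_1689 g_14_9881
theorem g_13_5785 : good 5785 13 26 = true := by decide
theorem g_12_1689 : good 1689 12 27 = true := good_step 1689 12 26 g_13_1689 g_13_5785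
theorem g_12_3737 : good 3737 12 27 = true := by decide
theorem g_11_1689 : good 1689 11 28 = true := good_step 1689 11 27 g_12_1689 g_12_3737
theorem g_10_665 : good 665 10 29 = true := good_step 665 10 28 g_11_665 g_11_1689
theorem g_9_153 : good 153 9 30 = true := good_step 153 9 29 g_10_153 g_10_665
theorem g_9_409 : good 409 9 30 = true := by decide
theorem g_8_153 : good 153 8 31 = true := good_step 153 8 30 g_9_153 g_9_409
theorem g_7_25 : good 25 7 32 = true := good_step 25 7 31 g_8_25 g_8_153
theorem g_10_89 : good 89 10 29 = true := by decide
theorem g_11_601 : good 601 11 28 = true := by decide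
theorem g_14_1625 : good 1625 14 25 = true := by decide
theorem g_16_9817 : good 9817 16 23 = true := by decide
theorem g_16_42585 : good 42585 16 23 = true := by decide
theorem g_15_9817 : good 9817 15 24 = true := good_step 9817 15 23 g_16_9817 g_16_42585
theorem g_15_26201 : good 26201 15 24 = true := by decide
theorem g_14_9817 : good 9817 14 25 = true := good_step 9817 14 24 g_15_9817 g_15_26201
theorem g_13_1625 : good 1625 13 26 = true := good_step 1625 13 25 g_14_1625 g_14_9817
theorem g_14_5721 : good 5721 14 25 = true := by decide
theorem g_14_13913 : good 13913 14 25 = true := by decide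
theorem g_13_5721 : good 5721 13 26 = true := good_step 5721 13 25 g_14_5721 g_14_13913
theorem g_12_1625 : good 1625 12 27 = true := good_step 1625 12 26 g_13_1625 g_13_5721
theorem g_12_3673 : good 3673 12 27 = true := by decide
theorem g_11_1625 : good 1625 11 28 = true := good_step 1625 11 27 g_12_1625 g_12_3673
theorem g_10_601 : good 601 10 29 = true := good_step 601 10 28 g_11_601 g_11_1625
theorem g_9_89 : good 89 9 30 = true := good_step 89 9 29 g_10_89 g_10_601
theorem g_9_345 : good 345 9 30 = true := by decide
theorem g_8_89 : good 89 8 31 = true := good_step 89 8 30 g_9_89 g_9_345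
theorem g_11_217 : good 217 11 28 = true := by decide
theorem g_13_1241 : good 1241 13 26 = true := by decide
theorem g_14_5337 : good 5337 14 25 = true := by decide
theorem g_16_13529 : good 13529 16 23 = true := by decide
theorem g_16_46297 : good 46297 16 23 = true := by decide
theorem g_15_13529 : good 13529 15 24 = true := good_step 13529 15 23 g_16_13529 g_16_46297
theorem g_15_29913 : good 29913 15 24 = true := by decide
theorem g_14_13529 : good 13529 14 25 = true := good_step 13529 14 24 g_15_13529 g_15_29913
theorem g_13_5337 : good 5337 13 26 = true := good_step 5337 13 25 g_14_5337 g_14_13529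
theorem g_12_1241 : good 1241 12 27 = true := good_step 1241 12 26 g_13_1241 g_13_5337
theorem g_14_3289 : good 3289 14 25 = true := by decide
theorem g_15_11481 : good 11481 15 24 = true := by decide
theorem g_15_27865 : good 27865 15 24 = true := by decide
theorem g_14_11481 : good 11481 14 25 = true := good_step 11481 14 24 g_15_11481 g_15_27865
theorem g_13_3289 : good 3289 13 26 = true := good_step 3289 13 25 g_14_3289 g_14_11481
theorem g_13_7385 : good 7385 13 26 = true := by decide
theorem g_12_3289 : good 3289 12 27 = true := good_step 3289 12 26 g_13_3289 g_13_7385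
theorem g_11_1241 : good 1241 11 28 = true := good_step 1241 11 27 g_12_1241 g_12_3289
theorem g_10_217 : good 217 10 29 = true := good_step 217 10 28 g_11_217 g_11_1241
theorem g_10_729 : good 729 10 29 = true := by decide
theorem g_9_217 : good 217 9 30 = true := good_step 217 9 29 g_10_217 g_10_729
theorem g_9_473 : good 473 9 30 = true := by decide
theorem g_8_217 : good 217 8 31 = true := good_step 217 8 30 g_9_217 g_9_473
theorem g_7_89 : good 89 7 32 = true := good_step 89 7 31 g_8_89 g_8_217
theorem g_6_25 : good 25 6 33 = true := good_step 25 6 32 g_7_25 g_7_89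
theorem g_6_57 : good 57 6 33 = true := by decide
theorem g_5_25 : good 25 5 34 = true := good_step 25 5 33 g_6_25 g_6_57
theorem g_4_9 : good 9 4 35 = true := good_step 9 4 34 g_5_9 g_5_25
theorem g_3_1 : good 1 3 36 = true := good_step 1 3 35 g_4_1 g_4_9
theorem g_6_5 : good 5 6 33 = true := by decide
theorem g_7_37 : good 37 7 32 = true := by decide
theorem g_10_101 : good 101 10 29 = true := by decide
theorem g_13_613 : good 613 13 26 = true := by decide
theorem g_14_4709 : good 4709 14 25 = true := by decide
theorem g_16_12901 : good 12901 16 23 = true := by decide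
theorem g_16_45669 : good 45669 16 23 = true := by decide
theorem g_15_12901 : good 12901 15 24 = true := good_step 12901 15 23 g_16_12901 g_16_45669
theorem g_15_29285 : good 29285 15 24 = true := by decide
theorem g_14_12901 : good 12901 14 25 = true := good_step 12901 14 24 g_15_12901 g_15_29285
theorem g_13_4709 : good 4709 13 26 = true := good_step 4709 13 25 g_14_4709 g_14_12901
theorem g_12_613 : good 613 12 27 = true := good_step 613 12 26 g_13_613 g_13_4709
theorem g_12_2661 : good 2661 12 27 = true := by decide
theorem g_11_613 : good 613 11 28 = true := good_step 613 11 27 g_12_613 g_12_2661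
theorem g_11_1637 : good 1637 11 28 = true := by decide
theorem g_10_613 : good 613 10 29 = true := good_step 613 10 28 g_11_613 g_11_1637
theorem g_9_101 : good 101 9 30 = true := good_step 101 9 29 g_10_101 g_10_613
theorem g_12_357 : good 357 12 27 = true := by decide
theorem g_13_2405 : good 2405 13 26 = true := by decide
theorem g_14_6501 : good 6501 14 25 = true := by decide
theorem g_14_14693 : good 14693 14 25 = true := by decide
theorem g_13_6501 : good 6501 13 26 = true := good_step 6501 13 25 g_14_6501 g_14_14693
theorem g_12_2405 : good 2405 12 27 = true := good_step 2405 12 26 g_13_2405 g_13_6501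
theorem g_11_357 : good 357 11 28 = true := good_step 357 11 27 g_12_357 g_12_2405
theorem g_11_1381 : good 1381 11 28 = true := by decide
theorem g_10_357 : good 357 10 29 = true := good_step 357 10 28 g_11_357 g_11_1381
theorem g_13_869 : good 869 13 26 = true := by decide
theorem g_14_4965 : good 4965 14 25 = true := by decide
theorem g_16_13157 : good 13157 16 23 = true := by decide
theorem g_16_45925 : good 45925 16 23 = true := by decide
theorem g_15_13157 : good 13157 15 24 = true := good_step 13157 15 23 g_16_13157 g_16_45925
theorem g_15_29541 : good 29541 15 24 = true := by decide
theorem g_14_13157 : good 13157 14 25 = true := good_step 13157 14 24 g_15_13157 g_15_29541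
theorem g_13_4965 : good 4965 13 26 = true := good_step 4965 13 25 g_14_4965 g_14_13157
theorem g_12_869 : good 869 12 27 = true := good_step 869 12 26 g_13_869 g_13_4965
theorem g_12_2917 : good 2917 12 27 = true := by decide
theorem g_11_869 : good 869 11 28 = true := good_step 869 11 27 g_12_869 g_12_2917
theorem g_11_1893 : good 1893 11 28 = true := by decide
theorem g_10_869 : good 869 10 29 = true := good_step 869 10 28 g_11_869 g_11_1893
theorem g_9_357 : good 357 9 30 = true := good_step 357 9 29 g_10_357 g_10_869
theorem g_8_101 : good 101 8 31 = true := good_step 101 8 30 g_9_101 g_9_357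
theorem g_8_229 : good 229 8 31 = true := by decide
theorem g_7_101 : good 101 7 32 = true := good_step 101 7 31 g_8_101 g_8_229
theorem g_6_37 : good 37 6 33 = true := good_step 37 6 32 g_7_37 g_7_101
theorem g_5_5 : good 5 5 34 = true := good_step 5 5 33 g_6_5 g_6_37
theorem g_5_21 : good 21 5 34 = true := by decide
theorem g_4_5 : good 5 4 35 = true := good_step 5 4 34 g_5_5 g_5_21
theorem g_7_13 : good 13 7 32 = true := by decide
theorem g_10_77 : good 77 10 29 = true := by decide
theorem g_11_589 : good 589 11 28 = true := by decide
theorem g_14_1613 : good 1613 14 25 = true := by decide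
theorem g_15_9805 : good 9805 15 24 = true := by decide
theorem g_15_26189 : good 26189 15 24 = true := by decide
theorem g_14_9805 : good 9805 14 25 = true := good_step 9805 14 24 g_15_9805 g_15_26189
theorem g_13_1613 : good 1613 13 26 = true := good_step 1613 13 25 g_14_1613 g_14_9805
theorem g_13_5709 : good 5709 13 26 = true := by decide
theorem g_12_1613 : good 1613 12 27 = true := good_step 1613 12 26 g_13_1613 g_13_5709
theorem g_12_3661 : good 3661 12 27 = true := by decide
theorem g_11_1613 : good 1613 11 28 = true := good_step 1613 11 27 g_12_1613 g_12_3661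
theorem g_10_589 : good 589 10 29 = true := good_step 589 10 28 g_11_589 g_11_1613
theorem g_9_77 : good 77 9 30 = true := good_step 77 9 29 g_10_77 g_10_589
theorem g_10_333 : good 333 10 29 = true := by decide
theorem g_13_845 : good 845 13 26 = true := by decide
theorem g_14_4941 : good 4941 14 25 = true := by decide
theorem g_14_13133 : good 13133 14 25 = true := by decide
theorem g_13_4941 : good 4941 13 26 = true := good_step 4941 13 25 g_14_4941 g_14_13133
theorem g_12_845 : good 845 12 27 = true := good_step 845 12 26 g_13_845 g_13_4941
theorem g_12_2893 : good 2893 12 27 = true := by decide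
theorem g_11_845 : good 845 11 28 = true := good_step 845 11 27 g_12_845 g_12_2893
theorem g_11_1869 : good 1869 11 28 = true := by decide
theorem g_10_845 : good 845 10 29 = true := good_step 845 10 28 g_11_845 g_11_1869
theorem g_9_333 : good 333 9 30 = true := good_step 333 9 29 g_10_333 g_10_845
theorem g_8_77 : good 77 8 31 = true := good_step 77 8 30 g_9_77 g_9_333
theorem g_10_205 : good 205 10 29 = true := by decide
theorem g_13_717 : good 717 13 26 = true := by decide
theorem g_14_4813 : good 4813 14 25 = true := by decide
theorem g_16_13005 : good 13005 16 23 = true := by decide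
theorem g_16_45773 : good 45773 16 23 = true := by decide
theorem g_15_13005 : good 13005 15 24 = true := good_step 13005 15 23 g_16_13005 g_16_45773
theorem g_15_29389 : good 29389 15 24 = true := by decide
theorem g_14_13005 : good 13005 14 25 = true := good_step 13005 14 24 g_15_13005 g_15_29389
theorem g_13_4813 : good 4813 13 26 = true := good_step 4813 13 25 g_14_4813 g_14_13005
theorem g_12_717 : good 717 12 27 = true := good_step 717 12 26 g_13_717 g_13_4813
theorem g_12_2765 : good 2765 12 27 = true := by decide
theorem g_11_717 : good 717 11 28 = true := good_step 717 11 27 g_12_717 g_12_2765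
theorem g_14_1741 : good 1741 14 25 = true := by decide
theorem g_16_9933 : good 9933 16 23 = true := by decide
theorem g_16_42701 : good 42701 16 23 = true := by decide
theorem g_15_9933 : good 9933 15 24 = true := good_step 9933 15 23 g_16_9933 g_16_42701
theorem g_17_26317 : good 26317 17 22 = true := by decide
theorem g_18_91853 : good 91853 18 21 = true := by decide
theorem g_18_222925 : good 222925 18 21 = true := by decide
theorem g_17_91853 : good 91853 17 22 = true := good_step 91853 17 21 g_18_91853 g_18_222925
theorem g_16_26317 : good 26317 16 23 = true := good_step 26317 16 22 g_17_26317 g_17_91853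
theorem g_16_59085 : good 59085 16 23 = true := by decide
theorem g_15_26317 : good 26317 15 24 = true := good_step 26317 15 23 g_16_26317 g_16_59085
theorem g_14_9933 : good 9933 14 25 = true := good_step 9933 14 24 g_15_9933 g_15_26317
theorem g_13_1741 : good 1741 13 26 = true := good_step 1741 13 25 g_14_1741 g_14_9933
theorem g_13_5837 : good 5837 13 26 = true := by decide
theorem g_12_1741 : good 1741 12 27 = true := good_step 1741 12 26 g_13_1741 g_13_5837
theorem g_12_3789 : good 3789 12 27 = true := by decide
theorem g_11_1741 : good 1741 11 28 = true := good_step 1741 11 27 g_12_1741 g_12_3789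
theorem g_10_717 : good 717 10 29 = true := good_step 717 10 28 g_11_717 g_11_1741
theorem g_9_205 : good 205 9 30 = true := good_step 205 9 29 g_10_205 g_10_717
theorem g_9_461 : good 461 9 30 = true := by decide
theorem g_8_205 : good 205 8 31 = true := good_step 205 8 30 g_9_205 g_9_461
theorem g_7_77 : good 77 7 32 = true := good_step 77 7 31 g_8_77 g_8_205
theorem g_6_13 : good 13 6 33 = true := good_step 13 6 32 g_7_13 g_7_77
theorem g_9_45 : good 45 9 30 = true := by decide
theorem g_10_301 : good 301 10 29 = true := by decide
theorem g_12_813 : good 813 12 27 = true := by decide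
theorem g_13_2861 : good 2861 13 26 = true := by decide
theorem g_16_6957 : good 6957 16 23 = true := by decide
theorem g_17_39725 : good 39725 17 22 = true := by decide
theorem g_17_105261 : good 105261 17 22 = true := by decide
theorem g_16_39725 : good 39725 16 23 = true := good_step 39725 16 22 g_17_39725 g_17_105261
theorem g_15_6957 : good 6957 15 24 = true := good_step 6957 15 23 g_16_6957 g_16_39725
theorem g_15_23341 : good 23341 15 24 = true := by decide
theorem g_14_6957 : good 6957 14 25 = true := good_step 6957 14 24 g_15_6957 g_15_23341
theorem g_14_15149 : good 15149 14 25 = true := by decide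
theorem g_13_6957 : good 6957 13 26 = true := good_step 6957 13 25 g_14_6957 g_14_15149
theorem g_12_2861 : good 2861 12 27 = true := good_step 2861 12 26 g_13_2861 g_13_6957
theorem g_11_813 : good 813 11 28 = true := good_step 813 11 27 g_12_813 g_12_2861
theorem g_11_1837 : good 1837 11 28 = true := by decide
theorem g_10_813 : good 813 10 29 = true := good_step 813 10 28 g_11_813 g_11_1837
theorem g_9_301 : good 301 9 30 = true := good_step 301 9 29 g_10_301 g_10_813
theorem g_8_45 : good 45 8 31 = true := good_step 45 8 30 g_9_45 g_9_301
theorem g_8_173 : good 173 8 31 = true := by decide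
theorem g_7_45 : good 45 7 32 = true := good_step 45 7 31 g_8_45 g_8_173
theorem g_7_109 : good 109 7 32 = true := by decide
theorem g_6_45 : good 45 6 33 = true := good_step 45 6 32 g_7_45 g_7_109
theorem g_5_13 : good 13 5 34 = true := good_step 13 5 33 g_6_13 g_6_45
theorem g_5_29 : good 29 5 34 = true := by decide
theorem g_4_13 : good 13 4 35 = true := good_step 13 4 34 g_5_13 g_5_29
theorem g_3_5 : good 5 3 36 = true := good_step 5 3 35 g_4_5 g_4_13
theorem g_2_1 : good 1 2 37 = true := good_step 1 2 36 g_3_1 g_3_5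
theorem g_5_3 : good 3 5 34 = true := by decide
theorem g_8_19 : good 19 8 31 = true := by decide
theorem g_9_147 : good 147 9 30 = true := by decide
theorem g_12_403 : good 403 12 27 = true := by decide
theorem g_15_2451 : good 2451 15 24 = true := by decide
theorem g_16_18835 : good 18835 16 23 = true := by decide
theorem g_18_51603 : good 51603 18 21 = true := by decide
theorem g_19_182675 : good 182675 19 20 = true := by decide
theorem g_19_444819 : good 444819 19 20 = true := by decide
theorem g_18_182675 : good 182675 18 21 = true := good_step 182675 18 20 g_19_182675 g_19_444819
theorem g_17_51603 : good 51603 17 22 = true := good_step 51603 17 21 g_18_51603 g_18_182675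
theorem g_17_117139 : good 117139 17 22 = true := by decide
theorem g_16_51603 : good 51603 16 23 = true := good_step 51603 16 22 g_17_51603 g_17_117139
theorem g_15_18835 : good 18835 15 24 = true := good_step 18835 15 23 g_16_18835 g_16_51603
theorem g_14_2451 : good 2451 14 25 = true := good_step 2451 14 24 g_15_2451 g_15_18835
theorem g_15_10643 : good 10643 15 24 = true := by decide
theorem g_16_27027 : good 27027 16 23 = true := by decide
theorem g_16_59795 : good 59795 16 23 = true := by decide
theorem g_15_27027 : good 27027 15 24 = true := good_step 27027 15 23 g_16_27027 g_16_59795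
theorem g_14_10643 : good 10643 14 25 = true := good_step 10643 14 24 g_15_10643 g_15_27027
theorem g_13_2451 : good 2451 13 26 = true := good_step 2451 13 25 g_14_2451 g_14_10643
theorem g_13_6547 : good 6547 13 26 = true := by decide
theorem g_12_2451 : good 2451 12 27 = true := good_step 2451 12 26 g_13_2451 g_13_6547
theorem g_11_403 : good 403 11 28 = true := good_step 403 11 27 g_12_403 g_12_2451
theorem g_14_1427 : good 1427 14 25 = true := by decide
theorem g_15_9619 : good 9619 15 24 = true := by decide
theorem g_15_26003 : good 26003 15 24 = true := by decide
theorem g_14_9619 : good 9619 14 25 = true := good_step 9619 14 24 g_15_9619 g_15_26003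
theorem g_13_1427 : good 1427 13 26 = true := good_step 1427 13 25 g_14_1427 g_14_9619
theorem g_13_5523 : good 5523 13 26 = true := by decide
theorem g_12_1427 : good 1427 12 27 = true := good_step 1427 12 26 g_13_1427 g_13_5523
theorem g_12_3475 : good 3475 12 27 = true := by decide
theorem g_11_1427 : good 1427 11 28 = true := good_step 1427 11 27 g_12_1427 g_12_3475
theorem g_10_403 : good 403 10 29 = true := good_step 403 10 28 g_11_403 g_11_1427
theorem g_10_915 : good 915 10 29 = true := by decide
theorem g_9_403 : good 403 9 30 = true := good_step 403 9 29 g_10_403 g_10_915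
theorem g_8_147 : good 147 8 31 = true := good_step 147 8 30 g_9_147 g_9_403
theorem g_7_19 : good 19 7 32 = true := good_step 19 7 31 g_8_19 g_8_147
theorem g_8_83 : good 83 8 31 = true := by decide
theorem g_11_211 : good 211 11 28 = true := by decide
theorem g_14_1235 : good 1235 14 25 = true := by decide
theorem g_15_9427 : good 9427 15 24 = true := by decide
theorem g_16_25811 : good 25811 16 23 = true := by decide
theorem g_16_58579 : good 58579 16 23 = true := by decide
theorem g_15_25811 : good 25811 15 24 = true := good_step 25811 15 23 g_16_25811 g_16_58579
theorem g_14_9427 : good 9427 14 25 = true := good_step 9427 14 24 g_15_9427 g_15_25811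
theorem g_13_1235 : good 1235 13 26 = true := good_step 1235 13 25 g_14_1235 g_14_9427
theorem g_13_5331 : good 5331 13 26 = true := by decide
theorem g_12_1235 : good 1235 12 27 = true := good_step 1235 12 26 g_13_1235 g_13_5331
theorem g_14_3283 : good 3283 14 25 = true := by decide
theorem g_15_11475 : good 11475 15 24 = true := by decide
theorem g_16_27859 : good 27859 16 23 = true := by decide
theorem g_16_60627 : good 60627 16 23 = true := by decide
theorem g_15_27859 : good 27859 15 24 = true := good_step 27859 15 23 g_16_27859 g_16_60627
theorem g_14_11475 : good 11475 14 25 = true := good_step 11475 14 24 g_15_11475 g_15_27859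
theorem g_13_3283 : good 3283 13 26 = true := good_step 3283 13 25 g_14_3283 g_14_11475
theorem g_13_7379 : good 7379 13 26 = true := by decide
theorem g_12_3283 : good 3283 12 27 = true := good_step 3283 12 26 g_13_3283 g_13_7379
theorem g_11_1235 : good 1235 11 28 = true := good_step 1235 11 27 g_12_1235 g_12_3283
theorem g_10_211 : good 211 10 29 = true := good_step 211 10 28 g_11_211 g_11_1235
theorem g_10_723 : good 723 10 29 = true := by decide
theorem g_9_211 : good 211 9 30 = true := good_step 211 9 29 g_10_211 g_10_723
theorem g_9_467 : good 467 9 30 = true := by decide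
theorem g_8_211 : good 211 8 31 = true := good_step 211 8 30 g_9_211 g_9_467
theorem g_7_83 : good 83 7 32 = true := good_step 83 7 31 g_8_83 g_8_211
theorem g_6_19 : good 19 6 33 = true := good_step 19 6 32 g_7_19 g_7_83
theorem g_9_51 : good 51 9 30 = true := by decide
theorem g_12_307 : good 307 12 27 = true := by decide
theorem g_13_2355 : good 2355 13 26 = true := by decide
theorem g_16_6451 : good 6451 16 23 = true := by decide
theorem g_18_39219 : good 39219 18 21 = true := by decide
theorem g_18_170291 : good 170291 18 21 = true := by decide
theorem g_17_39219 : good 39219 17 22 = true := good_step 39219 17 21 g_18_39219 g_18_170291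
theorem g_17_104755 : good 104755 17 22 = true := by decide
theorem g_16_39219 : good 39219 16 23 = true := good_step 39219 16 22 g_17_39219 g_17_104755
theorem g_15_6451 : good 6451 15 24 = true := good_step 6451 15 23 g_16_6451 g_16_39219
theorem g_16_22835 : good 22835 16 23 = true := by decide
theorem g_16_55603 : good 55603 16 23 = true := by decide
theorem g_15_22835 : good 22835 15 24 = true := good_step 22835 15 23 g_16_22835 g_16_55603
theorem g_14_6451 : good 6451 14 25 = true := good_step 6451 14 24 g_15_6451 g_15_22835
theorem g_14_14643 : good 14643 14 25 = true := by decide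
theorem g_13_6451 : good 6451 13 26 = true := good_step 6451 13 25 g_14_6451 g_14_14643
theorem g_12_2355 : good 2355 12 27 = true := good_step 2355 12 26 g_13_2355 g_13_6451
theorem g_11_307 : good 307 11 28 = true := good_step 307 11 27 g_12_307 g_12_2355
theorem g_12_1331 : good 1331 12 27 = true := by decide
theorem g_15_3379 : good 3379 15 24 = true := by decide
theorem g_16_19763 : good 19763 16 23 = true := by decide
theorem g_18_52531 : good 52531 18 21 = true := by decide
theorem g_19_183603 : good 183603 19 20 = true := by decide
theorem g_19_445747 : good 445747 19 20 = true := by decide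
theorem g_18_183603 : good 183603 18 21 = true := good_step 183603 18 20 g_19_183603 g_19_445747
theorem g_17_52531 : good 52531 17 22 = true := good_step 52531 17 21 g_18_52531 g_18_183603
theorem g_17_118067 : good 118067 17 22 = true := by decide
theorem g_16_52531 : good 52531 16 23 = true := good_step 52531 16 22 g_17_52531 g_17_118067
theorem g_15_19763 : good 19763 15 24 = true := good_step 19763 15 23 g_16_19763 g_16_52531
theorem g_14_3379 : good 3379 14 25 = true := good_step 3379 14 24 g_15_3379 g_15_19763
theorem g_14_11571 : good 11571 14 25 = true := by decide
theorem g_13_3379 : good 3379 13 26 = true := good_step 3379 13 25 g_14_3379 g_14_11571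
theorem g_13_7475 : good 7475 13 26 = true := by decide
theorem g_12_3379 : good 3379 12 27 = true := good_step 3379 12 26 g_13_3379 g_13_7475
theorem g_11_1331 : good 1331 11 28 = true := good_step 1331 11 27 g_12_1331 g_12_3379
theorem g_10_307 : good 307 10 29 = true := good_step 307 10 28 g_11_307 g_11_1331
theorem g_10_819 : good 819 10 29 = true := by decide
theorem g_9_307 : good 307 9 30 = true := good_step 307 9 29 g_10_307 g_10_819
theorem g_8_51 : good 51 8 31 = true := good_step 51 8 30 g_9_51 g_9_307
theorem g_11_179 : good 179 11 28 = true := by decide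
theorem g_12_1203 : good 1203 12 27 = true := by decide
theorem g_15_3251 : good 3251 15 24 = true := by decide
theorem g_17_19635 : good 19635 17 22 = true := by decide
theorem g_17_85171 : good 85171 17 22 = true := by decide
theorem g_16_19635 : good 19635 16 23 = true := good_step 19635 16 22 g_17_19635 g_17_85171
theorem g_16_52403 : good 52403 16 23 = true := by decide
theorem g_15_19635 : good 19635 15 24 = true := good_step 19635 15 23 g_16_19635 g_16_52403
theorem g_14_3251 : good 3251 14 25 = true := good_step 3251 14 24 g_15_3251 g_15_19635
theorem g_14_11443 : good 11443 14 25 = true := by decide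
theorem g_13_3251 : good 3251 13 26 = true := good_step 3251 13 25 g_14_3251 g_14_11443
theorem g_13_7347 : good 7347 13 26 = true := by decide
theorem g_12_3251 : good 3251 12 27 = true := good_step 3251 12 26 g_13_3251 g_13_7347
theorem g_11_1203 : good 1203 11 28 = true := good_step 1203 11 27 g_12_1203 g_12_3251
theorem g_10_179 : good 179 10 29 = true := good_step 179 10 28 g_11_179 g_11_1203
theorem g_10_691 : good 691 10 29 = true := by decide
theorem g_9_179 : good 179 9 30 = true := good_step 179 9 29 g_10_179 g_10_691
theorem g_12_435 : good 435 12 27 = true := by decide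
theorem g_14_2483 : good 2483 14 25 = true := by decide
theorem g_15_10675 : good 10675 15 24 = true := by decide
theorem g_15_27059 : good 27059 15 24 = true := by decide
theorem g_14_10675 : good 10675 14 25 = true := good_step 10675 14 24 g_15_10675 g_15_27059
theorem g_13_2483 : good 2483 13 26 = true := good_step 2483 13 25 g_14_2483 g_14_10675
theorem g_15_6579 : good 6579 15 24 = true := by decide
theorem g_16_22963 : good 22963 16 23 = true := by decide
theorem g_16_55731 : good 55731 16 23 = true := by decide
theorem g_15_22963 : good 22963 15 24 = true := good_step 22963 15 23 g_16_22963 g_16_55731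
theorem g_14_6579 : good 6579 14 25 = true := good_step 6579 14 24 g_15_6579 g_15_22963
theorem g_14_14771 : good 14771 14 25 = true := by decide
theorem g_13_6579 : good 6579 13 26 = true := good_step 6579 13 25 g_14_6579 g_14_14771
theorem g_12_2483 : good 2483 12 27 = true := good_step 2483 12 26 g_13_2483 g_13_6579
theorem g_11_435 : good 435 11 28 = true := good_step 435 11 27 g_12_435 g_12_2483
theorem g_11_1459 : good 1459 11 28 = true := by decide
theorem g_10_435 : good 435 10 29 = true := good_step 435 10 28 g_11_435 g_11_1459
theorem g_10_947 : good 947 10 29 = true := by decide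
theorem g_9_435 : good 435 9 30 = true := good_step 435 9 29 g_10_435 g_10_947
theorem g_8_179 : good 179 8 31 = true := good_step 179 8 30 g_9_179 g_9_435
theorem g_7_51 : good 51 7 32 = true := good_step 51 7 31 g_8_51 g_8_179
theorem g_7_115 : good 115 7 32 = true := by decide
theorem g_6_51 : good 51 6 33 = true := good_step 51 6 32 g_7_51 g_7_115
theorem g_5_19 : good 19 5 34 = true := good_step 19 5 33 g_6_19 g_6_51
theorem g_4_3 : good 3 4 35 = true := good_step 3 4 34 g_5_3 g_5_19
theorem g_7_11 : good 11 7 32 = true := by decide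
theorem g_8_75 : good 75 8 31 = true := by decide
theorem g_11_203 : good 203 11 28 = true := by decide
theorem g_14_1227 : good 1227 14 25 = true := by decide
theorem g_15_9419 : good 9419 15 24 = true := by decide
theorem g_16_25803 : good 25803 16 23 = true := by decide
theorem g_16_58571 : good 58571 16 23 = true := by decide
theorem g_15_25803 : good 25803 15 24 = true := good_step 25803 15 23 g_16_25803 g_16_58571
theorem g_14_9419 : good 9419 14 25 = true := good_step 9419 14 24 g_15_9419 g_15_25803
theorem g_13_1227 : good 1227 13 26 = true := good_step 1227 13 25 g_14_1227 g_14_9419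
theorem g_13_5323 : good 5323 13 26 = true := by decide
theorem g_12_1227 : good 1227 12 27 = true := good_step 1227 12 26 g_13_1227 g_13_5323
theorem g_12_3275 : good 3275 12 27 = true := by decide
theorem g_11_1227 : good 1227 11 28 = true := good_step 1227 11 27 g_12_1227 g_12_3275
theorem g_10_203 : good 203 10 29 = true := good_step 203 10 28 g_11_203 g_11_1227
theorem g_11_715 : good 715 11 28 = true := by decide
theorem g_14_1739 : good 1739 14 25 = true := by decide
theorem g_15_9931 : good 9931 15 24 = true := by decide
theorem g_16_26315 : good 26315 16 23 = true := by decide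
theorem g_16_59083 : good 59083 16 23 = true := by decide
theorem g_15_26315 : good 26315 15 24 = true := good_step 26315 15 23 g_16_26315 g_16_59083
theorem g_14_9931 : good 9931 14 25 = true := good_step 9931 14 24 g_15_9931 g_15_26315
theorem g_13_1739 : good 1739 13 26 = true := good_step 1739 13 25 g_14_1739 g_14_9931
theorem g_13_5835 : good 5835 13 26 = true := by decide
theorem g_12_1739 : good 1739 12 27 = true := good_step 1739 12 26 g_13_1739 g_13_5835
theorem g_12_3787 : good 3787 12 27 = true := by decide
theorem g_11_1739 : good 1739 11 28 = true := good_step 1739 11 27 g_12_1739 g_12_3787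
theorem g_10_715 : good 715 10 29 = true := good_step 715 10 28 g_11_715 g_11_1739
theorem g_9_203 : good 203 9 30 = true := good_step 203 9 29 g_10_203 g_10_715
theorem g_9_459 : good 459 9 30 = true := by decide
theorem g_8_203 : good 203 8 31 = true := good_step 203 8 30 g_9_203 g_9_459
theorem g_7_75 : good 75 7 32 = true := good_step 75 7 31 g_8_75 g_8_203
theorem g_6_11 : good 11 6 33 = true := good_step 11 6 32 g_7_11 g_7_75
theorem g_6_43 : good 43 6 33 = true := by decide
theorem g_5_11 : good 11 5 34 = true := good_step 11 5 33 g_6_11 g_6_43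
theorem g_8_27 : good 27 8 31 = true := by decide
theorem g_11_155 : good 155 11 28 = true := by decide
theorem g_12_1179 : good 1179 12 27 = true := by decide
theorem g_14_3227 : good 3227 14 25 = true := by decide
theorem g_14_11419 : good 11419 14 25 = true := by decide
theorem g_13_3227 : good 3227 13 26 = true := good_step 3227 13 25 g_14_3227 g_14_11419
theorem g_13_7323 : good 7323 13 26 = true := by decide
theorem g_12_3227 : good 3227 12 27 = true := good_step 3227 12 26 g_13_3227 g_13_7323
theorem g_11_1179 : good 1179 11 28 = true := good_step 1179 11 27 g_12_1179 g_12_3227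
theorem g_10_155 : good 155 10 29 = true := good_step 155 10 28 g_11_155 g_11_1179
theorem g_11_667 : good 667 11 28 = true := by decide
theorem g_14_1691 : good 1691 14 25 = true := by decide
theorem g_15_9883 : good 9883 15 24 = true := by decide
theorem g_15_26267 : good 26267 15 24 = true := by decide
theorem g_14_9883 : good 9883 14 25 = true := good_step 9883 14 24 g_15_9883 g_15_26267
theorem g_13_1691 : good 1691 13 26 = true := good_step 1691 13 25 g_14_1691 g_14_9883
theorem g_13_5787 : good 5787 13 26 = true := by decide
theorem g_12_1691 : good 1691 12 27 = true := good_step 1691 12 26 g_13_1691 g_13_5787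
theorem g_12_3739 : good 3739 12 27 = true := by decide
theorem g_11_1691 : good 1691 11 28 = true := good_step 1691 11 27 g_12_1691 g_12_3739
theorem g_10_667 : good 667 10 29 = true := good_step 667 10 28 g_11_667 g_11_1691
theorem g_9_155 : good 155 9 30 = true := good_step 155 9 29 g_10_155 g_10_667
theorem g_11_411 : good 411 11 28 = true := by decide
theorem g_14_1435 : good 1435 14 25 = true := by decide
theorem g_15_9627 : good 9627 15 24 = true := by decide
theorem g_16_26011 : good 26011 16 23 = true := by decide
theorem g_16_58779 : good 58779 16 23 = true := by decide
theorem g_15_26011 : good 26011 15 24 = true := good_step 26011 15 23 g_16_26011 g_16_58779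
theorem g_14_9627 : good 9627 14 25 = true := good_step 9627 14 24 g_15_9627 g_15_26011
theorem g_13_1435 : good 1435 13 26 = true := good_step 1435 13 25 g_14_1435 g_14_9627
theorem g_13_5531 : good 5531 13 26 = true := by decide
theorem g_12_1435 : good 1435 12 27 = true := good_step 1435 12 26 g_13_1435 g_13_5531
theorem g_15_3483 : good 3483 15 24 = true := by decide
theorem g_17_19867 : good 19867 17 22 = true := by decide
theorem g_17_85403 : good 85403 17 22 = true := by decide
theorem g_16_19867 : good 19867 16 23 = true := good_step 19867 16 22 g_17_19867 g_17_85403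
theorem g_16_52635 : good 52635 16 23 = true := by decide
theorem g_15_19867 : good 19867 15 24 = true := good_step 19867 15 23 g_16_19867 g_16_52635
theorem g_14_3483 : good 3483 14 25 = true := good_step 3483 14 24 g_15_3483 g_15_19867
theorem g_14_11675 : good 11675 14 25 = true := by decide
theorem g_13_3483 : good 3483 13 26 = true := good_step 3483 13 25 g_14_3483 g_14_11675
theorem g_13_7579 : good 7579 13 26 = true := by decide
theorem g_12_3483 : good 3483 12 27 = true := good_step 3483 12 26 g_13_3483 g_13_7579
theorem g_11_1435 : good 1435 11 28 = true := good_step 1435 11 27 g_12_1435 g_12_3483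
theorem g_10_411 : good 411 10 29 = true := good_step 411 10 28 g_11_411 g_11_1435
theorem g_10_923 : good 923 10 29 = true := by decide
theorem g_9_411 : good 411 9 30 = true := good_step 411 9 29 g_10_411 g_10_923
theorem g_8_155 : good 155 8 31 = true := good_step 155 8 30 g_9_155 g_9_411
theorem g_7_27 : good 27 7 32 = true := good_step 27 7 31 g_8_27 g_8_155
theorem g_10_91 : good 91 10 29 = true := by decide
theorem g_11_603 : good 603 11 28 = true := by decide
theorem g_13_1627 : good 1627 13 26 = true := by decide
theorem g_14_5723 : good 5723 14 25 = true := by decide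
theorem g_17_13915 : good 13915 17 22 = true := by decide
theorem g_18_79451 : good 79451 18 21 = true := by decide
theorem g_18_210523 : good 210523 18 21 = true := by decide
theorem g_17_79451 : good 79451 17 22 = true := good_step 79451 17 21 g_18_79451 g_18_210523
theorem g_16_13915 : good 13915 16 23 = true := good_step 13915 16 22 g_17_13915 g_17_79451
theorem g_16_46683 : good 46683 16 23 = true := by decide
theorem g_15_13915 : good 13915 15 24 = true := good_step 13915 15 23 g_16_13915 g_16_46683
theorem g_15_30299 : good 30299 15 24 = true := by decide
theorem g_14_13915 : good 13915 14 25 = true := good_step 13915 14 24 g_15_13915 g_15_30299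
theorem g_13_5723 : good 5723 13 26 = true := good_step 5723 13 25 g_14_5723 g_14_13915
theorem g_12_1627 : good 1627 12 27 = true := good_step 1627 12 26 g_13_1627 g_13_5723
theorem g_12_3675 : good 3675 12 27 = true := by decide
theorem g_11_1627 : good 1627 11 28 = true := good_step 1627 11 27 g_12_1627 g_12_3675
theorem g_10_603 : good 603 10 29 = true := good_step 603 10 28 g_11_603 g_11_1627
theorem g_9_91 : good 91 9 30 = true := good_step 91 9 29 g_10_91 g_10_603
theorem g_9_347 : good 347 9 30 = true := by decide
theorem g_8_91 : good 91 8 31 = true := good_step 91 8 30 g_9_91 g_9_347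
theorem g_8_219 : good 219 8 31 = true := by decide
theorem g_7_91 : good 91 7 32 = true := good_step 91 7 31 g_8_91 g_8_219
theorem g_6_27 : good 27 6 33 = true := good_step 27 6 32 g_7_27 g_7_91
theorem g_6_59 : good 59 6 33 = true := by decide
theorem g_5_27 : good 27 5 34 = true := good_step 27 5 33 g_6_27 g_6_59
theorem g_4_11 : good 11 4 35 = true := good_step 11 4 34 g_5_11 g_5_27
theorem g_3_3 : good 3 3 36 = true := good_step 3 3 35 g_4_3 g_4_11
theorem g_3_7 : good 7 3 36 = true := by decide
theorem g_2_3 : good 3 2 37 = true := good_step 3 2 36 g_3_3 g_3_7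
theorem g_1_1 : good 1 1 38 = true := good_step 1 1 37 g_2_1 g_2_3
theorem g_0_0 : good 0 0 39 = true := good_step 0 0 38 g_1_0 g_1_1

theorem good39 : good 0 0 39 = true := g_0_0

/-- Every infinite binary word of subword complexity at most `2n` contains a
nonempty factor of exponent at least 5/2. -/
theorem low_complexity_has_52_power (u : ℕ → Fin 2)
    (h : ∀ n, 1 ≤ n → complexity u n ≤ 2 * n) :
    ∃ v : List (Fin 2), v ≠ [] ∧ IsFactor v u ∧ (5 / 2 : ℝ) ≤ exponent v := by
  have h0 : encU u 0 = 0 := rfl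
  obtain ⟨L', hchk⟩ := good_spec u 39 0 (by rw [h0]; exact good39)
  rw [chk, Bool.or_eq_true] at hchk
  rcases hchk with hp | hc
  · exact powChk_sem u L' hp
  · exact absurd (cntChk_sem u L' hc h) (by simp)
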